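/- arXiv:math/0510155 — 4 statements merged into one kernel-verified Lean document; each statement's English description precedes it below -/
import Mathlib

section
/- For every n ≥ 1, P(n)² = Σ_{k=1}^n S(n,k) · k! · F₁₁₁₁(k), where S(n,k) are the Stirling numbers of the second kind. -/
open scoped BigOperators

/-- A zero-one matrix (entries in `Bool`) with no zero rows and no zero columns. -/
def IsIncidence {k l : ℕ} (M : Matrix (Fin k) (Fin l) Bool) : Prop :=
  (∀ i, ∃ j, M i j = true) ∧ (∀ j, ∃ i, M i j = true)

/-- The number of entries equal to one in a zero-one matrix. -/
def numOnes {k l : ℕ} (M : Matrix (Fin k) (Fin l) Bool) : ℕ :=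
  (Finset.univ.filter fun p : Fin k × Fin l => M p.1 p.2 = true).card

/-- `F₁₁₁₁ n`: the number of incidence matrices (of any size) with exactly `n` ones. -/
noncomputable def F1111 (n : ℕ) : ℕ :=
  Nat.card {A : Σ k l : ℕ, Matrix (Fin k) (Fin l) Bool //
    IsIncidence A.2.2 ∧ numOnes A.2.2 = n}

noncomputable def mIJ (i j n : ℕ) : ℕ :=
  Nat.card {M : Matrix (Fin i) (Fin j) Bool // IsIncidence M ∧ numOnes M = n}

/-- total preorders on `Fin n` -/
noncomputable def numPreorders (n : ℕ) : ℕ :=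
  Nat.card {R : Fin n → Fin n → Prop //
    (∀ x, R x x) ∧ (∀ x y z, R x y → R y z → R x z) ∧ (∀ x y, R x y ∨ x = y ∨ R y x)}

noncomputable def numPreordersWithBlocks (n k : ℕ) : ℕ :=
  Nat.card {R : Fin n → Fin n → Prop //
    ((∀ x, R x x) ∧ (∀ x y z, R x y → R y z → R x z) ∧ (∀ x y, R x y ∨ x = y ∨ R y x)) ∧
    Nat.card (Quot fun x y => R x y ∧ R y x) = k}

noncomputable def S11 (n : ℕ) : ℕ :=
  Nat.card {A : Σ k : ℕ, Matrix (Fin k) (Fin k) Bool //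
    (∀ i j, A.2 i j = A.2 j i) ∧ IsIncidence A.2 ∧ numOnes A.2 = n}

def trSigma : (Σ k l : ℕ, Matrix (Fin k) (Fin l) Bool) → (Σ k l : ℕ, Matrix (Fin k) (Fin l) Bool) :=
  fun A => ⟨A.2.1, A.1, A.2.2.transpose⟩

noncomputable def Phi11 (n : ℕ) : ℕ :=
  Nat.card (Quot fun x y : {A : Σ k l : ℕ, Matrix (Fin k) (Fin l) Bool //
    IsIncidence A.2.2 ∧ numOnes A.2.2 = n} => trSigma x.1 = y.1)

noncomputable def F1011 (n : ℕ) : ℕ :=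
  Nat.card {A : Σ k l : ℕ, Matrix (Fin k) (Fin l) Bool //
    IsIncidence A.2.2 ∧ numOnes A.2.2 = n ∧
    ∀ i i' : Fin A.1, (∀ j, A.2.2 i j = A.2.2 i' j) → i = i'}

noncomputable def F0001 (n : ℕ) : ℕ :=
  Nat.card (Quot fun x y : {A : Σ k l : ℕ, Matrix (Fin k) (Fin l) Bool //
      IsIncidence A.2.2 ∧ numOnes A.2.2 = n ∧
      ∀ i i' : Fin A.1, (∀ j, A.2.2 i j = A.2.2 i' j) → i = i'} =>
    ∃ σ : Equiv.Perm (Fin x.1.1), ∃ τ : Equiv.Perm (Fin x.1.2.1),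
      y.1 = ⟨x.1.1, x.1.2.1, Matrix.of fun i j => x.1.2.2 (σ i) (τ j)⟩)

noncomputable def numInvolutions (n : ℕ) : ℕ :=
  Nat.card {σ : Equiv.Perm (Fin n) // σ * σ = 1}

/-- number of cycles of a permutation, counting fixed points as cycles -/
def numCycles {n : ℕ} (σ : Equiv.Perm (Fin n)) : ℕ :=
  Multiset.card σ.cycleType + (n - σ.support.card)

/-- unsigned Stirling number of the first kind: permutations of `n` with `k` cycles -/
noncomputable def stirling1Unsigned (n k : ℕ) : ℕ :=
  Nat.card {σ : Equiv.Perm (Fin n) // numCycles σ = k}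

/-- Stirling number of the second kind: partitions of an `n`-set into `k` blocks -/
noncomputable def stirling2 (n k : ℕ) : ℕ :=
  Nat.card {c : Setoid (Fin n) // Nat.card (Quotient c) = k}

noncomputable def sSym (k n : ℕ) : ℕ :=
  Nat.card {M : Matrix (Fin k) (Fin k) Bool // (∀ a b, M a b = M b a) ∧ numOnes M = n}

noncomputable def muSym (i n : ℕ) : ℕ :=
  Nat.card {M : Matrix (Fin i) (Fin i) Bool //
    (∀ a b, M a b = M b a) ∧ IsIncidence M ∧ numOnes M = n}

open scoped BigOperators
open Function

noncomputable section
open Classical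

noncomputable def surjCount (n k : ℕ) : ℕ :=
  Nat.card {f : Fin n → Fin k // Function.Surjective f}

instance setoidFinite (α : Type*) [Finite α] : Finite (Setoid α) :=
  Finite.of_injective (fun c => c.r)
    (fun a b h => Setoid.ext (fun x y => by
      exact iff_of_eq (congrFun (congrFun h x) y)))

lemma natCard_sigma {ι : Type*} [Fintype ι] (β : ι → Type*) [∀ i, Finite (β i)] :
    Nat.card (Σ i, β i) = ∑ i, Nat.card (β i) := by
  have : ∀ i, Fintype (β i) := fun i => Fintype.ofFinite _
  simp only [Nat.card_eq_fintype_card]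
  rw [Fintype.card_sigma]

def fiberEquivQuotEquiv {n k : ℕ} (c : Setoid (Fin n)) :
    {fp : {f : Fin n → Fin k // Function.Surjective f} // Setoid.ker fp.1 = c}
      ≃ (Quotient c ≃ Fin k) where
  toFun fp := Equiv.ofBijective
    (Quotient.lift fp.1.1 (fun a b hab => by
      have h2 := fp.2; rw [← h2] at hab; exact hab))
    ⟨by rintro ⟨a⟩ ⟨b⟩ h
        have : Setoid.ker fp.1.1 a b := h
        rw [fp.2] at this
        exact Quotient.sound this,
     by rintro y; obtain ⟨x, hx⟩ := fp.1.2 y; exact ⟨⟦x⟧, hx⟩⟩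
  invFun e := ⟨⟨fun x => e ⟦x⟧, fun y => ⟨(e.symm y).out, by simp [Quotient.out_eq]⟩⟩,
    Setoid.ext fun a b => by
      constructor
      · intro h; exact Quotient.exact (e.injective h)
      · intro h; show e _ = e _; rw [Quotient.sound h]⟩
  left_inv fp := by
    apply Subtype.ext; apply Subtype.ext; funext x; rfl
  right_inv e := by
    apply Equiv.ext; intro q; induction q using Quotient.ind; rfl

lemma surjCount_eq (n k : ℕ) : surjCount n k = stirling2 n k * k.factorial := by
  classical
  have hK := Equiv.sigmaFiberEquiv
    (fun fp : {f : Fin n → Fin k // Function.Surjective f} => Setoid.ker fp.1)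
  have hfin : Fintype (Setoid (Fin n)) := Fintype.ofFinite _
  rw [surjCount, ← Nat.card_congr hK, natCard_sigma]
  have hterm : ∀ c : Setoid (Fin n),
      Nat.card {fp : {f : Fin n → Fin k // Function.Surjective f} // Setoid.ker fp.1 = c}
        = if Nat.card (Quotient c) = k then k.factorial else 0 := by
    intro c
    rw [Nat.card_congr (fiberEquivQuotEquiv c)]
    by_cases h : Nat.card (Quotient c) = k
    · rw [if_pos h]
      have : Fintype (Quotient c) := Fintype.ofFinite _
      have hcard : Fintype.card (Quotient c) = k := by
        rw [← Nat.card_eq_fintype_card]; exact h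
      have e : Quotient c ≃ Fin k := Fintype.equivFinOfCardEq hcard
      rw [Nat.card_eq_fintype_card, Fintype.card_equiv e, hcard]
    · rw [if_neg h]
      have : IsEmpty (Quotient c ≃ Fin k) := by
        constructor; intro e
        exact h (by rw [Nat.card_congr e, Nat.card_eq_fintype_card, Fintype.card_fin])
      exact Nat.card_of_isEmpty
  simp only [hterm]
  rw [Finset.sum_ite, Finset.sum_const_zero, add_zero, Finset.sum_const, smul_eq_mul]
  congr 1
  rw [stirling2, Nat.card_eq_fintype_card, Fintype.card_subtype]


def WkOrd (n : ℕ) := {R : Fin n → Fin n → Prop //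
  (∀ x, R x x) ∧ (∀ x y z, R x y → R y z → R x z) ∧ (∀ x y, R x y ∨ x = y ∨ R y x)}

def rankToWk (n : ℕ) : (Σ m : Fin (n+1), {f : Fin n → Fin m.1 // Surjective f}) → WkOrd n :=
  fun p => ⟨fun x y => p.2.1 x ≤ p.2.1 y,
    fun x => le_refl _,
    fun x y z h1 h2 => le_trans h1 h2,
    fun x y => by
      rcases le_total (p.2.1 x) (p.2.1 y) with h | h
      · exact Or.inl h
      · exact Or.inr (Or.inr h)⟩

lemma rank_unique {n a b : ℕ} {f : Fin n → Fin a} {g : Fin n → Fin b}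
    (hf : Surjective f) (hg : Surjective g) (hfg : ∀ x y, f x ≤ f y ↔ g x ≤ g y) :
    ∃ h : a = b, ∀ x, (f x : ℕ) = (g x : ℕ) := by
  have hcongr : ∀ u v, f u = f v → g u = g v := fun u v h => by
    apply le_antisymm
    · exact (hfg u v).1 (le_of_eq h)
    · exact (hfg v u).1 (le_of_eq h.symm)
  set φ : Fin a → Fin b := fun i => g (surjInv hf i) with hφ
  have hφf : ∀ x, φ (f x) = g x := fun x =>
    hcongr _ _ (surjInv_eq hf (f x))
  have hmono : StrictMono φ := by
    intro i j hij
    have hfi : f (surjInv hf i) = i := surjInv_eq hf i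
    have hfj : f (surjInv hf j) = j := surjInv_eq hf j
    rw [← not_le]
    intro hle
    have := (hfg _ _).2 hle
    rw [hfi, hfj] at this
    exact absurd this (not_le.mpr hij)
  have hsurj : Surjective φ := by
    intro w
    obtain ⟨x, hx⟩ := hg w
    exact ⟨f x, by rw [hφf x, hx]⟩
  have hab : a = b := by
    have h1 : a ≤ b := by
      simpa using Fintype.card_le_of_injective φ hmono.injective
    have h2 : b ≤ a := by
      simpa using Fintype.card_le_of_surjective φ hsurj
    omega
  subst hab
  have hid : φ = id := by
    refine (StrictMono.range_inj hmono strictMono_id).1 ?_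
    rw [Set.range_id]
    exact Set.range_eq_univ.mpr hsurj
  refine ⟨rfl, fun x => ?_⟩
  have := hφf x
  rw [hid] at this
  simp only [id] at this
  rw [this]

attribute [-instance] Quotient.instLE_mathlib Quotient.instPreorder

lemma rankToWk_bijective (n : ℕ) : Bijective (rankToWk n) := by
  constructor
  · rintro ⟨⟨a, ha⟩, f, hf⟩ ⟨⟨b, hb⟩, g, hg⟩ h
    have hval := congrArg Subtype.val h
    simp only [rankToWk] at hval
    have hfg : ∀ x y, f x ≤ f y ↔ g x ≤ g y := fun x y =>
      iff_of_eq (congrFun (congrFun hval x) y)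
    obtain ⟨hab, hxy⟩ := rank_unique hf hg hfg
    subst hab
    have : f = g := funext fun x => Fin.ext (hxy x)
    subst this
    rfl
  · rintro ⟨r, hrefl, htrans, htot⟩
    set s : Setoid (Fin n) := ⟨fun x y => r x y ∧ r y x,
      fun x => ⟨hrefl x, hrefl x⟩,
      fun h => ⟨h.2, h.1⟩,
      fun h1 h2 => ⟨htrans _ _ _ h1.1 h2.1, htrans _ _ _ h2.2 h1.2⟩⟩ with hs
    letI : LinearOrder (Quotient s) :=
      { le := Quotient.lift₂ r (fun a b c d hac hbd => propext
          ⟨fun h => htrans _ _ _ hac.2 (htrans _ _ _ h hbd.1),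
           fun h => htrans _ _ _ hac.1 (htrans _ _ _ h hbd.2)⟩)
        le_refl := by
          intro q; induction q using Quotient.inductionOn; exact hrefl _
        le_trans := by
          intro q1 q2 q3
          induction q1 using Quotient.inductionOn
          induction q2 using Quotient.inductionOn
          induction q3 using Quotient.inductionOn
          exact htrans _ _ _
        le_antisymm := by
          intro q1 q2
          induction q1 using Quotient.inductionOn
          induction q2 using Quotient.inductionOn
          intro h1 h2
          exact Quotient.sound ⟨h1, h2⟩
        le_total := by
          intro q1 q2
          induction q1 using Quotient.inductionOn with | _ x => ?_
          induction q2 using Quotient.inductionOn with | _ y => ?_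
          rcases htot x y with h | h | h
          · exact Or.inl h
          · cases h; exact Or.inl (hrefl x)
          · exact Or.inr h
        toDecidableLE := fun a b => Classical.propDecidable _ }
    haveI : Finite (Quotient s) := Finite.of_surjective _ (Quotient.mk_surjective (s := s))
    letI : Fintype (Quotient s) := Fintype.ofFinite _
    set m := Fintype.card (Quotient s) with hm
    have hmn : m < n + 1 := by
      have : m ≤ Fintype.card (Fin n) :=
        Fintype.card_le_of_surjective _ (Quotient.mk_surjective (s := s))
      simpa using Nat.lt_succ_of_le (by simpa using this)
    set e : Fin m ≃o Quotient s := monoEquivOfFin _ rfl with he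
    refine ⟨⟨⟨m, hmn⟩, fun x => e.symm ⟦x⟧, ?_⟩, ?_⟩
    · intro i
      obtain ⟨q, hq⟩ := e.symm.surjective i
      obtain ⟨x, hx⟩ := (Quotient.mk_surjective (s := s)) q
      exact ⟨x, by rw [← hq, ← hx]⟩
    · apply Subtype.ext
      funext x y
      show (e.symm ⟦x⟧ ≤ e.symm ⟦y⟧) = r x y
      rw [e.symm.le_iff_le]
      show (Quotient.lift₂ r _ ⟦x⟧ ⟦y⟧) = r x y
      rfl


abbrev Ones {a b : ℕ} (M : Matrix (Fin a) (Fin b) Bool) : Type :=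
  {p : Fin a × Fin b // M p.1 p.2 = true}

lemma card_ones {a b : ℕ} (M : Matrix (Fin a) (Fin b) Bool) :
    Nat.card (Ones M) = numOnes M := by
  rw [Nat.card_eq_fintype_card]
  show Fintype.card {p : Fin a × Fin b // M p.1 p.2 = true} = _
  rw [Fintype.card_subtype]
  rfl

lemma rows_le_numOnes {a b : ℕ} {M : Matrix (Fin a) (Fin b) Bool}
    (hM : IsIncidence M) : a ≤ numOnes M := by
  classical
  have : Fintype (Ones M) := Fintype.ofFinite _
  have hinj : Function.Injective
      (fun i : Fin a => (⟨(i, Classical.choose (hM.1 i)),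
        Classical.choose_spec (hM.1 i)⟩ : Ones M)) := by
    intro i j h
    have := congrArg (fun p : Ones M => p.1.1) h
    exact this
  have := Fintype.card_le_of_injective _ hinj
  rw [← card_ones M, Nat.card_eq_fintype_card]
  simpa using this

lemma cols_le_numOnes {a b : ℕ} {M : Matrix (Fin a) (Fin b) Bool}
    (hM : IsIncidence M) : b ≤ numOnes M := by
  classical
  have : Fintype (Ones M) := Fintype.ofFinite _
  have hinj : Function.Injective
      (fun j : Fin b => (⟨(Classical.choose (hM.2 j), j),
        Classical.choose_spec (hM.2 j)⟩ : Ones M)) := by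
    intro i j h
    have := congrArg (fun p : Ones M => p.1.2) h
    exact this
  have := Fintype.card_le_of_injective _ hinj
  rw [← card_ones M, Nat.card_eq_fintype_card]
  simpa using this

abbrev SurjTo (n : ℕ) (β : Type) : Type := {f : Fin n → β // Surjective f}

def psi {n a b : ℕ} :
    (Σ M : {M : Matrix (Fin a) (Fin b) Bool // IsIncidence M}, SurjTo n (Ones M.1)) →
      SurjTo n (Fin a) × SurjTo n (Fin b) :=
  fun P => ⟨⟨fun x => (P.2.1 x).1.1, by
      intro i
      obtain ⟨j, hj⟩ := P.1.2.1 i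
      obtain ⟨x, hx⟩ := P.2.2 ⟨(i, j), hj⟩
      exact ⟨x, by simp [hx]⟩⟩,
    ⟨fun x => (P.2.1 x).1.2, by
      intro j
      obtain ⟨i, hi⟩ := P.1.2.2 j
      obtain ⟨x, hx⟩ := P.2.2 ⟨(i, j), hi⟩
      exact ⟨x, by simp [hx]⟩⟩⟩

lemma psi_bijective (n a b : ℕ) : Bijective (@psi n a b) := by
  constructor
  · rintro ⟨⟨M, hM⟩, h, hh⟩ ⟨⟨M', hM'⟩, h', hh'⟩ heq
    have h1 : ∀ x, (h x).1.1 = (h' x).1.1 := fun x =>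
      congrFun (congrArg Subtype.val (congrArg Prod.fst heq)) x
    have h2 : ∀ x, (h x).1.2 = (h' x).1.2 := fun x =>
      congrFun (congrArg Subtype.val (congrArg Prod.snd heq)) x
    have hMeq : M = M' := by
      funext i j
      rw [Bool.eq_iff_iff]
      have key : ∀ (N : Matrix (Fin a) (Fin b) Bool) (k : Fin n → Ones N),
          Surjective k → (N i j = true ↔ ∃ x, (k x).1.1 = i ∧ (k x).1.2 = j) := by
        intro N k hk
        constructor
        · intro hij
          obtain ⟨x, hx⟩ := hk ⟨(i, j), hij⟩
          exact ⟨x, by rw [hx], by rw [hx]⟩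
        · rintro ⟨x, hx1, hx2⟩
          have := (k x).2
          rwa [show (k x).1 = (i, j) from Prod.ext hx1 hx2] at this
      rw [key M h hh, key M' h' hh']
      constructor
      · rintro ⟨x, hx1, hx2⟩; exact ⟨x, (h1 x) ▸ hx1, (h2 x) ▸ hx2⟩
      · rintro ⟨x, hx1, hx2⟩; exact ⟨x, (h1 x).symm ▸ hx1, (h2 x).symm ▸ hx2⟩
    subst hMeq
    have : h = h' := by
      funext x
      exact Subtype.ext (Prod.ext (h1 x) (h2 x))
    subst this
    rfl
  · rintro ⟨⟨f, hf⟩, ⟨g, hg⟩⟩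
    set M : Matrix (Fin a) (Fin b) Bool :=
      Matrix.of fun i j => decide (∃ x, f x = i ∧ g x = j) with hMdef
    have hMiff : ∀ i j, M i j = true ↔ ∃ x, f x = i ∧ g x = j := by
      intro i j
      simp [hMdef, decide_eq_true_iff]
    have hMinc : IsIncidence M := by
      constructor
      · intro i
        obtain ⟨x, hx⟩ := hf i
        exact ⟨g x, (hMiff i (g x)).2 ⟨x, hx, rfl⟩⟩
      · intro j
        obtain ⟨x, hx⟩ := hg j
        exact ⟨f x, (hMiff (f x) j).2 ⟨x, rfl, hx⟩⟩
    refine ⟨⟨⟨M, hMinc⟩, ⟨fun x => ⟨(f x, g x), (hMiff _ _).2 ⟨x, rfl, rfl⟩⟩, ?_⟩⟩, ?_⟩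
    · rintro ⟨⟨i, j⟩, hij⟩
      obtain ⟨x, hx1, hx2⟩ := (hMiff i j).1 hij
      exact ⟨x, Subtype.ext (Prod.ext hx1 hx2)⟩
    · rfl


lemma card_surjTo {n k : ℕ} {β : Type} [Finite β] (e : β ≃ Fin k) :
    Nat.card (SurjTo n β) = surjCount n k := by
  refine Nat.card_congr (Equiv.subtypeEquiv (Equiv.arrowCongr (Equiv.refl (Fin n)) e) fun f => ?_)
  constructor
  · intro hf
    intro y
    obtain ⟨x, hx⟩ := hf (e.symm y)
    exact ⟨x, by simp [Equiv.arrowCongr, hx]⟩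
  · intro hf
    intro y
    obtain ⟨x, hx⟩ := hf (e y)
    refine ⟨x, e.injective ?_⟩
    simpa [Equiv.arrowCongr] using hx

lemma surjCount_eq_zero {n k : ℕ} (hn : 1 ≤ n) (h : k ∉ Finset.Icc 1 n) :
    surjCount n k = 0 := by
  rw [Finset.mem_Icc, not_and_or] at h
  have : IsEmpty {f : Fin n → Fin k // Surjective f} := by
    constructor
    rintro ⟨f, hf⟩
    rcases h with h | h
    · have hk : k = 0 := by omega
      subst hk
      exact (f ⟨0, hn⟩).elim0
    · have := Fintype.card_le_of_surjective f hf
      simp only [Fintype.card_fin] at this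
      omega
  rw [surjCount]
  exact Nat.card_of_isEmpty

lemma surjCount_expand {n : ℕ} (hn : 1 ≤ n) (v : ℕ) :
    surjCount n v = ∑ k ∈ Finset.Icc 1 n, if v = k then surjCount n k else 0 := by
  rw [Finset.sum_ite_eq]
  by_cases h : v ∈ Finset.Icc 1 n
  · rw [if_pos h]
  · rw [if_neg h, surjCount_eq_zero hn h]

def f1111Equiv (n k : ℕ) (hk : k ≤ n) :
    {A : Σ p q : ℕ, Matrix (Fin p) (Fin q) Bool // IsIncidence A.2.2 ∧ numOnes A.2.2 = k}
      ≃ Σ (a : Fin (n+1)) (b : Fin (n+1)),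
        {M : Matrix (Fin a.1) (Fin b.1) Bool // IsIncidence M ∧ numOnes M = k} where
  toFun A := ⟨⟨A.1.1, Nat.lt_succ_of_le (le_trans
        (le_trans (rows_le_numOnes A.2.1) (le_of_eq A.2.2)) hk)⟩,
      ⟨A.1.2.1, Nat.lt_succ_of_le (le_trans
        (le_trans (cols_le_numOnes A.2.1) (le_of_eq A.2.2)) hk)⟩,
      ⟨A.1.2.2, A.2⟩⟩
  invFun B := ⟨⟨B.1.1, B.2.1.1, B.2.2.1⟩, B.2.2.2⟩
  left_inv A := rfl
  right_inv B := rfl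

lemma F1111_eq (n k : ℕ) (hk : k ≤ n) :
    F1111 k = ∑ a : Fin (n+1), ∑ b : Fin (n+1),
      Nat.card {M : Matrix (Fin a.1) (Fin b.1) Bool // IsIncidence M ∧ numOnes M = k} := by
  rw [F1111, Nat.card_congr (f1111Equiv n k hk), natCard_sigma]
  exact Finset.sum_congr rfl fun a _ => natCard_sigma _

lemma inner_count (n a b k : ℕ) :
    (∑ M : {M : Matrix (Fin a) (Fin b) Bool // IsIncidence M},
        if numOnes M.1 = k then surjCount n k else 0)
      = Nat.card {M : Matrix (Fin a) (Fin b) Bool // IsIncidence M ∧ numOnes M = k}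
          * surjCount n k := by
  classical
  rw [Finset.sum_ite, Finset.sum_const_zero, add_zero, Finset.sum_const, smul_eq_mul]
  congr 1
  rw [Nat.card_congr (Equiv.subtypeSubtypeEquivSubtypeInter
    (fun M : Matrix (Fin a) (Fin b) Bool => IsIncidence M)
    (fun M => numOnes M = k)).symm]
  rw [Nat.card_eq_fintype_card, Fintype.card_subtype]



/-- `P(n)² = Σ_{k=1}^n S(n,k) k! F₁₁₁₁(k)`. -/
theorem numPreorders_sq_eq (n : ℕ) (hn : 1 ≤ n) :
    numPreorders n ^ 2 =
      ∑ k ∈ Finset.Icc 1 n, stirling2 n k * k.factorial * F1111 k := by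
  classical
  have hW : numPreorders n = Nat.card (WkOrd n) := rfl
  have hWS : Nat.card (WkOrd n)
      = Nat.card (Σ m : Fin (n+1), {f : Fin n → Fin m.1 // Surjective f}) :=
    (Nat.card_eq_of_bijective _ (rankToWk_bijective n)).symm
  have step1 : numPreorders n ^ 2
      = ∑ a : Fin (n+1), ∑ b : Fin (n+1),
          Nat.card (SurjTo n (Fin a.1) × SurjTo n (Fin b.1)) := by
    have e : ((Σ m : Fin (n+1), {f : Fin n → Fin m.1 // Surjective f})
          × (Σ m : Fin (n+1), {f : Fin n → Fin m.1 // Surjective f}))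
        ≃ Σ (a : Fin (n+1)) (b : Fin (n+1)), SurjTo n (Fin a.1) × SurjTo n (Fin b.1) :=
      { toFun := fun P => ⟨P.1.1, P.2.1, P.1.2, P.2.2⟩
        invFun := fun Q => (⟨Q.1, Q.2.2.1⟩, ⟨Q.2.1, Q.2.2.2⟩)
        left_inv := fun P => rfl
        right_inv := fun Q => rfl }
    have eW : WkOrd n ≃ (Σ m : Fin (n+1), {f : Fin n → Fin m.1 // Surjective f}) :=
      (Equiv.ofBijective _ (rankToWk_bijective n)).symm
    rw [hW, sq, ← Nat.card_prod, Nat.card_congr ((eW.prodCongr eW).trans e), natCard_sigma]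
    exact Finset.sum_congr rfl fun a _ => natCard_sigma _
  have step2 : ∀ a b : ℕ,
      Nat.card (SurjTo n (Fin a) × SurjTo n (Fin b))
        = ∑ M : {M : Matrix (Fin a) (Fin b) Bool // IsIncidence M},
            surjCount n (numOnes M.1) := by
    intro a b
    rw [← Nat.card_eq_of_bijective _ (psi_bijective n a b), natCard_sigma]
    refine Finset.sum_congr rfl fun M _ => ?_
    have hcard : Fintype.card (Ones M.1) = numOnes M.1 := by
      rw [← Nat.card_eq_fintype_card]; exact card_ones M.1
    exact card_surjTo (Fintype.equivFinOfCardEq hcard)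
  calc numPreorders n ^ 2
      = ∑ a : Fin (n+1), ∑ b : Fin (n+1),
          ∑ M : {M : Matrix (Fin a.1) (Fin b.1) Bool // IsIncidence M},
            surjCount n (numOnes M.1) := by
        rw [step1]
        exact Finset.sum_congr rfl fun a _ => Finset.sum_congr rfl fun b _ => step2 a.1 b.1
    _ = ∑ a : Fin (n+1), ∑ b : Fin (n+1), ∑ k ∈ Finset.Icc 1 n,
          ∑ M : {M : Matrix (Fin a.1) (Fin b.1) Bool // IsIncidence M},
            (if numOnes M.1 = k then surjCount n k else 0) := by
        refine Finset.sum_congr rfl fun a _ => Finset.sum_congr rfl fun b _ => ?_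
        rw [Finset.sum_comm]
        exact Finset.sum_congr rfl fun M _ => surjCount_expand hn _
    _ = ∑ a : Fin (n+1), ∑ k ∈ Finset.Icc 1 n, ∑ b : Fin (n+1),
          ∑ M : {M : Matrix (Fin a.1) (Fin b.1) Bool // IsIncidence M},
            (if numOnes M.1 = k then surjCount n k else 0) := by
        exact Finset.sum_congr rfl fun a _ => Finset.sum_comm
    _ = ∑ k ∈ Finset.Icc 1 n, ∑ a : Fin (n+1), ∑ b : Fin (n+1),
          ∑ M : {M : Matrix (Fin a.1) (Fin b.1) Bool // IsIncidence M},
            (if numOnes M.1 = k then surjCount n k else 0) := Finset.sum_comm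
    _ = ∑ k ∈ Finset.Icc 1 n, ∑ a : Fin (n+1), ∑ b : Fin (n+1),
          Nat.card {M : Matrix (Fin a.1) (Fin b.1) Bool // IsIncidence M ∧ numOnes M = k}
            * surjCount n k := by
        refine Finset.sum_congr rfl fun k _ => ?_
        exact Finset.sum_congr rfl fun a _ => Finset.sum_congr rfl fun b _ =>
          inner_count n a.1 b.1 k
    _ = ∑ k ∈ Finset.Icc 1 n, stirling2 n k * k.factorial * F1111 k := by
        refine Finset.sum_congr rfl fun k hk => ?_
        rw [Finset.mem_Icc] at hk
        have hfac : (∑ a : Fin (n+1), ∑ b : Fin (n+1),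
            Nat.card {M : Matrix (Fin a.1) (Fin b.1) Bool // IsIncidence M ∧ numOnes M = k}
              * surjCount n k)
            = (∑ a : Fin (n+1), ∑ b : Fin (n+1),
                Nat.card {M : Matrix (Fin a.1) (Fin b.1) Bool // IsIncidence M ∧ numOnes M = k})
              * surjCount n k := by
          rw [Finset.sum_mul]
          exact Finset.sum_congr rfl fun a _ => (Finset.sum_mul _ _ _).symm
        rw [hfac, ← F1111_eq n k hk.2, surjCount_eq, mul_comm]
end
end

section
/- For all complex (or real) z with |z| < log 2, the series Σ_{n=0}^∞ P(n) zⁿ / n! converges and equals 1/(2 − e^z). -/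
open scoped BigOperators

section NumPreordersEGF

open Classical

/-- weak order predicate -/
private def IsWO {α : Type*} (R : α → α → Prop) : Prop :=
  (∀ x, R x x) ∧ (∀ x y z, R x y → R y z → R x z) ∧ (∀ x y, R x y ∨ x = y ∨ R y x)

private lemma numPreorders_def' (n : ℕ) :
    numPreorders n = Nat.card {R : Fin n → Fin n → Prop // IsWO R} := rfl

/-- transfer along an equivalence -/
private def woEquiv {α β : Type*} (e : α ≃ β) :
    {R : α → α → Prop // IsWO R} ≃ {R : β → β → Prop // IsWO R} where
  toFun := fun ⟨R, h⟩ => ⟨fun x y => R (e.symm x) (e.symm y), by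
    obtain ⟨h1, h2, h3⟩ := h
    refine ⟨fun x => h1 _, fun x y z a b => h2 _ _ _ a b, fun x y => ?_⟩
    rcases h3 (e.symm x) (e.symm y) with h | h | h
    · exact Or.inl h
    · exact Or.inr (Or.inl (by simpa using congrArg e h))
    · exact Or.inr (Or.inr h)⟩
  invFun := fun ⟨R, h⟩ => ⟨fun x y => R (e x) (e y), by
    obtain ⟨h1, h2, h3⟩ := h
    refine ⟨fun x => h1 _, fun x y z a b => h2 _ _ _ a b, fun x y => ?_⟩
    rcases h3 (e x) (e y) with h | h | h
    · exact Or.inl h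
    · exact Or.inr (Or.inl (e.injective h))
    · exact Or.inr (Or.inr h)⟩
  left_inv := fun ⟨R, h⟩ => by ext x y; simp
  right_inv := fun ⟨R, h⟩ => by ext x y; simp

private lemma card_wo (α : Type*) [Finite α] :
    Nat.card {R : α → α → Prop // IsWO R} = numPreorders (Nat.card α) := by
  rw [numPreorders_def']
  exact Nat.card_congr (woEquiv (Finite.equivFin α))

/-- existence of a top element -/
private lemma exists_top {α : Type*} [Finite α] [Nonempty α] {R : α → α → Prop} (h : IsWO R) :
    ∃ m, ∀ y, R y m := by
  obtain ⟨h1, h2, h3⟩ := h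
  have key : ∀ s : Finset α, s.Nonempty → ∃ m ∈ s, ∀ y ∈ s, R y m := by
    intro s hs
    induction hs using Finset.Nonempty.cons_induction with
    | singleton a => exact ⟨a, by simp, by simp [h1]⟩
    | cons a s ha hs ih =>
      obtain ⟨m, hm, hmax⟩ := ih
      rcases h3 m a with hma | rfl | ham
      · refine ⟨a, by simp, ?_⟩
        intro y hy
        rcases Finset.mem_cons.1 hy with rfl | hy
        · exact h1 y
        · exact h2 _ _ _ (hmax y hy) hma
      · exact ⟨m, Finset.mem_cons_self _ _, fun y hy => by
          rcases Finset.mem_cons.1 hy with rfl | hy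
          · exact h1 y
          · exact hmax y hy⟩
      · refine ⟨m, Finset.mem_cons.2 (Or.inr hm), ?_⟩
        intro y hy
        rcases Finset.mem_cons.1 hy with rfl | hy
        · exact ham
        · exact hmax y hy
  haveI := Fintype.ofFinite α
  obtain ⟨m, _, hm⟩ := key Finset.univ ⟨Classical.arbitrary α, Finset.mem_univ _⟩
  exact ⟨m, fun y => hm y (Finset.mem_univ y)⟩

variable {α : Type*} [Fintype α] [DecidableEq α]

/-- the top block of a relation -/
private noncomputable def topSet (R : α → α → Prop) : Finset α :=
  Finset.univ.filter (fun x => ∀ y, R y x)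

private lemma mem_topSet {R : α → α → Prop} {x : α} : x ∈ topSet R ↔ ∀ y, R y x := by
  simp [topSet]

/-- extend a relation on the complement of `T` by putting `T` on top -/
private def extendRel (T : Finset α) (R' : {x // x ∈ Tᶜ} → {x // x ∈ Tᶜ} → Prop) :
    α → α → Prop :=
  fun x y => y ∈ T ∨ ∃ (hx : x ∈ Tᶜ) (hy : y ∈ Tᶜ), R' ⟨x, hx⟩ ⟨y, hy⟩

private lemma extendRel_wo {T : Finset α} {R' : {x // x ∈ Tᶜ} → {x // x ∈ Tᶜ} → Prop}
    (h' : IsWO R') : IsWO (extendRel T R') := by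
  obtain ⟨h1, h2, h3⟩ := h'
  refine ⟨fun x => ?_, fun x y z a b => ?_, fun x y => ?_⟩
  · by_cases hx : x ∈ T
    · exact Or.inl hx
    · exact Or.inr ⟨Finset.mem_compl.2 hx, Finset.mem_compl.2 hx, h1 _⟩
  · by_cases hz : z ∈ T
    · exact Or.inl hz
    · rcases b with hz' | ⟨hy, hz', hb⟩
      · exact absurd hz' hz
      · rcases a with hy' | ⟨hx, hy'', ha⟩
        · exact absurd hy' (Finset.mem_compl.1 hy)
        · exact Or.inr ⟨hx, hz', h2 _ _ _ ha hb⟩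
  · by_cases hy : y ∈ T
    · exact Or.inl (Or.inl hy)
    · by_cases hx : x ∈ T
      · exact Or.inr (Or.inr (Or.inl hx))
      · rcases h3 ⟨x, Finset.mem_compl.2 hx⟩ ⟨y, Finset.mem_compl.2 hy⟩ with h | h | h
        · exact Or.inl (Or.inr ⟨_, _, h⟩)
        · exact Or.inr (Or.inl (congrArg Subtype.val h))
        · exact Or.inr (Or.inr (Or.inr ⟨_, _, h⟩))

private lemma topSet_extendRel {T : Finset α} (hT : T.Nonempty)
    {R' : {x // x ∈ Tᶜ} → {x // x ∈ Tᶜ} → Prop} (h' : IsWO R') :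
    topSet (extendRel T R') = T := by
  ext x
  rw [mem_topSet]
  constructor
  · intro h
    by_contra hx
    obtain ⟨t, ht⟩ := hT
    rcases h t with h0 | ⟨ht', hx', _⟩
    · exact hx h0
    · exact Finset.mem_compl.1 ht' ht
  · intro hx y
    exact Or.inl hx

/-- the fiber equivalence -/
private noncomputable def fiberEquiv (T : Finset α) (hT : T.Nonempty) :
    {A : {R : α → α → Prop // IsWO R} //
        (fun B : {R : α → α → Prop // IsWO R} => topSet B.1) A = T} ≃
      {R' : {x // x ∈ Tᶜ} → {x // x ∈ Tᶜ} → Prop // IsWO R'} where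
  toFun := fun ⟨⟨R, hR⟩, _⟩ => ⟨fun x y => R x.1 y.1, by
    obtain ⟨h1, h2, h3⟩ := hR
    refine ⟨fun x => h1 _, fun x y z a b => h2 _ _ _ a b, fun x y => ?_⟩
    rcases h3 x.1 y.1 with h | h | h
    · exact Or.inl h
    · exact Or.inr (Or.inl (Subtype.ext h))
    · exact Or.inr (Or.inr h)⟩
  invFun := fun ⟨R', h'⟩ => ⟨⟨extendRel T R', extendRel_wo h'⟩, topSet_extendRel hT h'⟩
  left_inv := by
    rintro ⟨⟨R, hR⟩, htop⟩
    simp only at htop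
    refine Subtype.ext (Subtype.ext ?_)
    funext x y
    simp only [extendRel]
    apply propext
    constructor
    · rintro (hy | ⟨hx, hy, h⟩)
      · exact (mem_topSet.1 (htop ▸ hy)) x
      · exact h
    · intro hxy
      by_cases hy : y ∈ T
      · exact Or.inl hy
      · have hx : x ∉ T := by
          intro hx
          apply hy
          rw [← htop] at hx ⊢
          rw [mem_topSet] at hx ⊢
          exact fun z => hR.2.1 _ _ _ (hx z) hxy
        exact Or.inr ⟨Finset.mem_compl.2 hx, Finset.mem_compl.2 hy, hxy⟩
  right_inv := by
    rintro ⟨R', h'⟩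
    refine Subtype.ext ?_
    funext x y
    simp only [extendRel]
    apply propext
    constructor
    · rintro (hy | ⟨hx, hy, h⟩)
      · exact absurd hy (Finset.mem_compl.1 y.2)
      · exact h
    · intro h
      exact Or.inr ⟨x.2, y.2, h⟩

private lemma topSet_nonempty [Nonempty α] {R : α → α → Prop} (h : IsWO R) :
    (topSet R).Nonempty := by
  obtain ⟨m, hm⟩ := exists_top h
  exact ⟨m, mem_topSet.2 hm⟩

private lemma card_wo_eq_sum [Nonempty α] :
    Nat.card {R : α → α → Prop // IsWO R} =
      ∑ T : {s : Finset α // s.Nonempty}, numPreorders (Fintype.card α - T.1.card) := by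
  let Φ : {R : α → α → Prop // IsWO R} → {s : Finset α // s.Nonempty} :=
    fun A => ⟨topSet A.1, topSet_nonempty A.2⟩
  have e1 : {R : α → α → Prop // IsWO R} ≃
      Σ T : {s : Finset α // s.Nonempty}, {A : {R : α → α → Prop // IsWO R} // Φ A = T} :=
    (Equiv.sigmaFiberEquiv Φ).symm
  rw [Nat.card_congr e1]
  haveI : ∀ T : {s : Finset α // s.Nonempty},
      Fintype {A : {R : α → α → Prop // IsWO R} // Φ A = T} := fun T => Fintype.ofFinite _
  rw [Nat.card_eq_fintype_card, Fintype.card_sigma]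
  refine Finset.sum_congr rfl fun T _ => ?_
  have e2 : {A : {R : α → α → Prop // IsWO R} // Φ A = T} ≃
      {R' : {x // x ∈ T.1ᶜ} → {x // x ∈ T.1ᶜ} → Prop // IsWO R'} := by
    refine Equiv.trans (Equiv.subtypeEquivRight fun A => ?_) (fiberEquiv T.1 T.2)
    show Φ A = T ↔ _
    rw [Subtype.ext_iff]
  rw [← Nat.card_eq_fintype_card, Nat.card_congr e2, card_wo]
  congr 1
  rw [Nat.card_eq_fintype_card, Fintype.card_coe, Finset.card_compl]

private lemma numPreorders_rec (n : ℕ) :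
    numPreorders (n + 1) + numPreorders (n + 1) =
      ∑ j ∈ Finset.range (n + 2), (n + 1).choose j * numPreorders j := by
  have h1 : numPreorders (n + 1) =
      ∑ T : {s : Finset (Fin (n + 1)) // s.Nonempty}, numPreorders (n + 1 - T.1.card) := by
    rw [numPreorders_def', card_wo_eq_sum]
    simp [Fintype.card_fin]
  have h2 : ∑ T : {s : Finset (Fin (n + 1)) // s.Nonempty}, numPreorders (n + 1 - T.1.card)
      = ∑ T ∈ Finset.univ.filter (fun s : Finset (Fin (n + 1)) => s.Nonempty),
          numPreorders (n + 1 - T.card) := by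
    exact (Finset.sum_subtype (Finset.univ.filter (fun s : Finset (Fin (n + 1)) => s.Nonempty))
      (by simp) (fun s => numPreorders (n + 1 - s.card))).symm
  have h3 : ∑ T ∈ Finset.univ.filter (fun s : Finset (Fin (n + 1)) => s.Nonempty),
          numPreorders (n + 1 - T.card) + numPreorders (n + 1)
      = ∑ T : Finset (Fin (n + 1)), numPreorders (n + 1 - T.card) := by
    rw [← Finset.sum_filter_add_sum_filter_not Finset.univ
      (fun s : Finset (Fin (n + 1)) => s.Nonempty) (fun s => numPreorders (n + 1 - s.card))]
    congr 1
    have : Finset.univ.filter (fun s : Finset (Fin (n + 1)) => ¬s.Nonempty)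
        = {(∅ : Finset (Fin (n + 1)))} := by
      ext s; simp [Finset.not_nonempty_iff_eq_empty]
    rw [this, Finset.sum_singleton]
    simp
  have h4 : ∑ T : Finset (Fin (n + 1)), numPreorders (n + 1 - T.card)
      = ∑ j ∈ Finset.range (n + 2), (n + 1).choose j * numPreorders (n + 1 - j) := by
    rw [← Finset.powerset_univ, Finset.sum_powerset_apply_card
      (fun j => numPreorders (n + 1 - j))]
    simp [Fintype.card_fin, smul_eq_mul]
  have h5 : ∑ j ∈ Finset.range (n + 2), (n + 1).choose j * numPreorders (n + 1 - j)
      = ∑ j ∈ Finset.range (n + 2), (n + 1).choose j * numPreorders j := by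
    rw [← Finset.sum_range_reflect]
    refine Finset.sum_congr rfl fun j hj => ?_
    rw [Finset.mem_range] at hj
    have hj' : j ≤ n + 1 := Nat.lt_succ_iff.1 hj
    have e1 : n + 2 - 1 - j = n + 1 - j := by omega
    have e2 : n + 1 - (n + 1 - j) = j := by omega
    rw [e1, e2, Nat.choose_symm hj']
  rw [h1, h2, ← h5, ← h4, ← h3, h1, h2]

private lemma numPreorders_zero : numPreorders 0 = 1 := by
  rw [numPreorders_def']
  haveI : Unique {R : Fin 0 → Fin 0 → Prop // IsWO R} :=
    { default := ⟨fun x _ => x.elim0,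
        ⟨fun x => x.elim0, fun x => x.elim0, fun x => x.elim0⟩⟩
      uniq := fun a => Subtype.ext (funext fun x => x.elim0) }
  simp [Nat.card_unique]

private lemma numPreorders_key (n : ℕ) :
    (∑ j ∈ Finset.range (n + 1), n.choose j * numPreorders j) + (if n = 0 then 1 else 0)
      = 2 * numPreorders n := by
  cases n with
  | zero => simp [numPreorders_zero]
  | succ n =>
    simp only [Nat.succ_ne_zero, if_false, add_zero]
    have h := numPreorders_rec n
    rw [show n + 2 = n + 1 + 1 from rfl] at h
    omega

private lemma exp_partial_bound (n : ℕ) :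
    ∑ j ∈ Finset.range (n + 1), (Real.log 2) ^ (n + 1 - j) / (n + 1 - j).factorial ≤ 1 := by
  have hL : (0:ℝ) ≤ Real.log 2 := Real.log_nonneg (by norm_num)
  have h1 : ∑ j ∈ Finset.range (n + 1), (Real.log 2) ^ (n + 1 - j) / (n + 1 - j).factorial
      = ∑ j ∈ Finset.range (n + 1), (Real.log 2) ^ (j + 1) / (j + 1).factorial := by
    rw [← Finset.sum_range_reflect (fun j => (Real.log 2) ^ (j + 1) / (j + 1).factorial) (n+1)]
    refine Finset.sum_congr rfl fun j hj => ?_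
    rw [Finset.mem_range] at hj
    have : n + 1 - 1 - j + 1 = n + 1 - j := by omega
    rw [this]
  rw [h1]
  have h2 : ∑ j ∈ Finset.range (n + 2), (Real.log 2) ^ j / (j).factorial
      = (∑ j ∈ Finset.range (n + 1), (Real.log 2) ^ (j + 1) / (j + 1).factorial) + 1 := by
    rw [Finset.sum_range_succ' (fun j => (Real.log 2) ^ j / (j).factorial) (n+1)]
    simp
  have h3 := Real.sum_le_exp_of_nonneg hL (n + 2)
  rw [Real.exp_log (by norm_num : (0:ℝ) < 2)] at h3
  linarith [h2 ▸ h3]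

private lemma numPreorders_bound (n : ℕ) :
    (numPreorders n : ℝ) * (Real.log 2) ^ n ≤ n.factorial := by
  induction n using Nat.strong_induction_on with
  | _ n ih =>
    match n with
    | 0 => simp [numPreorders_zero]
    | (n+1) =>
      have hL : (0:ℝ) < Real.log 2 := Real.log_pos (by norm_num)
      have hrec : (numPreorders (n+1) : ℝ)
          = ∑ j ∈ Finset.range (n + 1), ((n+1).choose j : ℝ) * numPreorders j := by
        have h := numPreorders_rec n
        rw [Finset.sum_range_succ] at h
        simp only [Nat.choose_self, one_mul] at h
        have : numPreorders (n+1)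
            = ∑ j ∈ Finset.range (n + 1), (n+1).choose j * numPreorders j := by omega
        rw [this]
        push_cast
        ring
      rw [hrec, Finset.sum_mul]
      have step : ∀ j ∈ Finset.range (n + 1),
          ((n+1).choose j : ℝ) * numPreorders j * (Real.log 2)^(n+1)
            ≤ ((n+1).factorial : ℝ) * ((Real.log 2) ^ (n + 1 - j) / (n + 1 - j).factorial) := by
        intro j hj
        rw [Finset.mem_range] at hj
        have hj' : j ≤ n + 1 := by omega
        have hpow : (Real.log 2)^(n+1) = (Real.log 2)^j * (Real.log 2)^(n+1-j) := by
          rw [← pow_add]; congr 1; omega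
        have hch : ((n+1).choose j : ℝ) * (j.factorial) * ((n+1-j).factorial)
            = (n+1).factorial := by
          exact_mod_cast congrArg (Nat.cast (R := ℝ))
            (Nat.choose_mul_factorial_mul_factorial hj')
        have hPj := ih j (by omega)
        calc ((n+1).choose j : ℝ) * numPreorders j * (Real.log 2)^(n+1)
            = ((n+1).choose j : ℝ) * ((numPreorders j : ℝ) * (Real.log 2)^j)
                * (Real.log 2)^(n+1-j) := by
              rw [hpow]; ring
          _ ≤ ((n+1).choose j : ℝ) * (j.factorial) * (Real.log 2)^(n+1-j) := by
              have h1 : (0:ℝ) ≤ ((n+1).choose j : ℝ) := by positivity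
              have h2 : (0:ℝ) ≤ (Real.log 2)^(n+1-j) := by positivity
              exact mul_le_mul_of_nonneg_right (mul_le_mul_of_nonneg_left hPj h1) h2
          _ = ((n+1).factorial : ℝ) * ((Real.log 2) ^ (n + 1 - j) / (n + 1 - j).factorial) := by
              rw [← hch]
              have : ((n+1-j).factorial : ℝ) ≠ 0 := by positivity
              field_simp
      calc ∑ j ∈ Finset.range (n + 1), ((n+1).choose j : ℝ) * numPreorders j * (Real.log 2)^(n+1)
          ≤ ∑ j ∈ Finset.range (n + 1),
              ((n+1).factorial : ℝ) * ((Real.log 2) ^ (n + 1 - j) / (n + 1 - j).factorial) :=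
            Finset.sum_le_sum step
        _ = ((n+1).factorial : ℝ) *
              ∑ j ∈ Finset.range (n + 1), (Real.log 2) ^ (n + 1 - j) / (n + 1 - j).factorial := by
            rw [Finset.mul_sum]
        _ ≤ ((n+1).factorial : ℝ) * 1 := by
            have := exp_partial_bound n
            have hf : (0:ℝ) ≤ ((n+1).factorial : ℝ) := by positivity
            nlinarith
        _ = ((n+1).factorial : ℝ) := mul_one _

end NumPreordersEGF

/-- for `|z| < log 2`, `Σ_{n≥0} P(n) zⁿ/n!` converges to `1/(2 - e^z)`. -/
theorem numPreorders_egf (z : ℂ) (hz : ‖z‖ < Real.log 2) :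
    HasSum (fun n : ℕ => (numPreorders n : ℂ) * z ^ n / (n.factorial : ℂ))
      (1 / (2 - Complex.exp z)) := by
  have hL : (0:ℝ) < Real.log 2 := Real.log_pos (by norm_num)
  set f : ℕ → ℂ := fun n => (numPreorders n : ℂ) * z ^ n / (n.factorial : ℂ) with hf_def
  set g : ℕ → ℂ := fun n => z ^ n / (n.factorial : ℂ) with hg_def
  -- summability of ‖f‖
  have hnorm : ∀ n, ‖f n‖ ≤ (‖z‖ / Real.log 2) ^ n := by
    intro n
    have h1 : ‖f n‖ = (numPreorders n : ℝ) * ‖z‖ ^ n / (n.factorial : ℝ) := by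
      simp [hf_def, norm_div, norm_mul, norm_pow, Complex.norm_natCast]
    rw [h1, div_pow]
    rw [div_le_div_iff₀ (by positivity) (by positivity)]
    have := numPreorders_bound n
    calc (numPreorders n : ℝ) * ‖z‖ ^ n * (Real.log 2) ^ n = ((numPreorders n : ℝ) * (Real.log 2)^n) * ‖z‖^n := by ring
      _ ≤ (n.factorial : ℝ) * ‖z‖ ^ n := by
          have : (0:ℝ) ≤ ‖z‖ ^ n := by positivity
          nlinarith [numPreorders_bound n]
      _ = ‖z‖ ^ n * (n.factorial : ℝ) := by ring
  have hrat : ‖z‖ / Real.log 2 < 1 := (div_lt_one hL).2 hz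
  have hf_norm : Summable fun n => ‖f n‖ := by
    refine Summable.of_nonneg_of_le (fun n => norm_nonneg _) hnorm ?_
    exact summable_geometric_of_lt_one (by positivity) hrat
  have hf_sum : Summable f := hf_norm.of_norm
  have hg_norm : Summable fun n => ‖g n‖ := by
    have := Real.summable_pow_div_factorial ‖z‖
    refine this.congr fun n => ?_
    simp [hg_def, norm_div, norm_pow, Complex.norm_natCast]
  have hg_sum : Summable g := hg_norm.of_norm
  have hg_val : ∑' n, g n = Complex.exp z := by
    rw [Complex.exp_eq_exp_ℂ, NormedSpace.exp_eq_tsum_div]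
  -- the Cauchy product
  have hC := tsum_mul_tsum_eq_tsum_sum_range_of_summable_norm hf_norm hg_norm
  have hterm : ∀ n : ℕ, ∑ k ∈ Finset.range (n + 1), f k * g (n - k)
      = 2 * f n - (if n = 0 then 1 else 0) := by
    intro n
    have hsum : ∑ k ∈ Finset.range (n + 1), f k * g (n - k)
        = (∑ k ∈ Finset.range (n + 1), (n.choose k : ℂ) * (numPreorders k : ℂ)) * z ^ n / (n.factorial : ℂ) := by
      rw [Finset.sum_mul, Finset.sum_div]
      refine Finset.sum_congr rfl fun k hk => ?_
      rw [Finset.mem_range] at hk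
      have hk' : k ≤ n := by omega
      have hch : ((n.choose k : ℂ)) * (k.factorial : ℂ) * ((n-k).factorial : ℂ) = (n.factorial : ℂ) := by
        exact_mod_cast congrArg (Nat.cast (R := ℂ)) (Nat.choose_mul_factorial_mul_factorial hk')
      have hzpow : z ^ k * z ^ (n - k) = z ^ n := by rw [← pow_add]; congr 1; omega
      simp only [hf_def, hg_def]
      have hkf : (k.factorial : ℂ) ≠ 0 := by exact_mod_cast k.factorial_ne_zero
      have hnkf : ((n-k).factorial : ℂ) ≠ 0 := by exact_mod_cast (n-k).factorial_ne_zero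
      have hnf : (n.factorial : ℂ) ≠ 0 := by exact_mod_cast n.factorial_ne_zero
      field_simp
      rw [← hzpow, ← hch]
      ring
    rw [hsum]
    have hkey : (∑ k ∈ Finset.range (n + 1), (n.choose k : ℂ) * (numPreorders k : ℂ))
        = 2 * (numPreorders n : ℂ) - (if n = 0 then 1 else 0) := by
      have := numPreorders_key n
      have hcast : ((∑ j ∈ Finset.range (n + 1), n.choose j * numPreorders j : ℕ) : ℂ)
          + ((if n = 0 then 1 else 0 : ℕ) : ℂ) = ((2 * numPreorders n : ℕ) : ℂ) := by
        exact_mod_cast congrArg (Nat.cast (R := ℂ)) this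
      push_cast at hcast
      rw [← hcast]
      split <;> push_cast <;> ring
    rw [hkey]
    rcases Nat.eq_zero_or_pos n with rfl | hn
    · simp [hf_def, numPreorders_zero]
    · have : n ≠ 0 := by omega
      simp only [this, if_false, sub_zero]
      simp only [hf_def]
      ring
  -- sum the identity
  have hδ : Summable (fun n : ℕ => (if n = 0 then (1:ℂ) else 0)) := by
    apply summable_of_ne_finset_zero (s := {0})
    intro n hn
    simp at hn
    simp [hn]
  have hrhs : ∑' n, ∑ k ∈ Finset.range (n + 1), f k * g (n - k)
      = 2 * (∑' n, f n) - 1 := by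
    calc ∑' n, ∑ k ∈ Finset.range (n + 1), f k * g (n - k)
        = ∑' n, (2 * f n - (if n = 0 then 1 else 0)) := by
          exact tsum_congr hterm
      _ = (∑' n, 2 * f n) - ∑' n, (if n = 0 then (1:ℂ) else 0) :=
          Summable.tsum_sub (hf_sum.mul_left 2) hδ
      _ = 2 * (∑' n, f n) - 1 := by
          rw [tsum_mul_left]
          congr 1
          exact tsum_ite_eq 0 1
  -- conclude
  have hne : (2 : ℂ) - Complex.exp z ≠ 0 := by
    intro h
    have hexp : Complex.exp z = 2 := by linear_combination -h
    have : ‖Complex.exp z‖ < 2 := by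
      rw [Complex.norm_exp]
      calc Real.exp z.re ≤ Real.exp ‖z‖ := Real.exp_le_exp.2 (Complex.re_le_norm z)
        _ < Real.exp (Real.log 2) := Real.exp_lt_exp.2 hz
        _ = 2 := Real.exp_log (by norm_num)
    rw [hexp] at this
    simp at this
  have hS : (∑' n, f n) * Complex.exp z = 2 * (∑' n, f n) - 1 := by
    rw [← hg_val, hC, hrhs]
  have hval : (∑' n, f n) = 1 / (2 - Complex.exp z) := by
    field_simp
    linear_combination -hS
  have := hf_sum.hasSum
  rwa [hval] at this
end

section
/- As n → ∞, Φ₁₁(n) ∼ (1/2) · F₁₁₁₁(n). -/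
open scoped BigOperators

open Filter Real Topology Finset

set_option linter.unusedSectionVars false
set_option linter.unusedTactic false
set_option linter.unnecessarySimpa false
set_option maxHeartbeats 1000000

section Inv
variable {α : Type*} [Finite α] {f : α → α}

lemma eqvGen_invol (hf : ∀ x, f (f x) = x) {x y : α}
    (h : Relation.EqvGen (fun a b => f a = b) x y) : x = y ∨ f x = y := by
  induction h with
  | rel a b hab => exact Or.inr hab
  | refl a => exact Or.inl rfl
  | symm a b _ ih =>
      rcases ih with h | h
      · exact Or.inl h.symm
      · exact Or.inr (by rw [← h, hf])
  | trans a b c _ _ ih1 ih2 =>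
      rcases ih1 with h | h <;> rcases ih2 with h2 | h2
      · exact Or.inl (h.trans h2)
      · exact Or.inr (by rw [h, h2])
      · exact Or.inr (h2 ▸ h)
      · exact Or.inl (by rw [← h2, ← h, hf])

lemma f_inj (hf : ∀ x, f (f x) = x) : Function.Injective f :=
  Function.LeftInverse.injective hf

lemma card_le_two_mul_quot (hf : ∀ x, f (f x) = x) :
    Nat.card α ≤ 2 * Nat.card (Quot (fun a b : α => f a = b)) := by
  classical
  set r := fun a b : α => f a = b with hr
  obtain ⟨s, hs⟩ : ∃ s : Quot r → α, ∀ c, Quot.mk r (s c) = c :=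
    ⟨fun c => (Quot.exists_rep c).choose, fun c => (Quot.exists_rep c).choose_spec⟩
  have key : Function.Injective
      (fun x : α => (Quot.mk r x, decide (x = s (Quot.mk r x)))) := by
    intro x y h
    have h1 : Quot.mk r x = Quot.mk r y := congrArg Prod.fst h
    have h2 := congrArg Prod.snd h
    simp only [h1, decide_eq_decide] at h2
    by_cases hy : y = s (Quot.mk r y)
    · exact (h2.mpr hy).trans hy.symm
    · have hx : ¬ x = s (Quot.mk r y) := fun hh => hy (h2.mp hh)
      have ex : f x = s (Quot.mk r y) := by
        have : Relation.EqvGen r x (s (Quot.mk r y)) := by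
          apply Quot.eqvGen_exact; rw [hs, h1]
        rcases eqvGen_invol hf this with h' | h'
        · exact absurd h' hx
        · exact h'
      have ey : f y = s (Quot.mk r y) := by
        have : Relation.EqvGen r y (s (Quot.mk r y)) := by
          apply Quot.eqvGen_exact; rw [hs]
        rcases eqvGen_invol hf this with h' | h'
        · exact absurd h' hy
        · exact h'
      exact f_inj hf (ex.trans ey.symm)
  calc Nat.card α ≤ Nat.card (Quot r × Bool) := Nat.card_le_card_of_injective _ key
    _ = 2 * Nat.card (Quot r) := by
        rw [Nat.card_prod]; simp [Nat.card_eq_fintype_card, mul_comm]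

lemma two_mul_quot_le (hf : ∀ x, f (f x) = x) :
    2 * Nat.card (Quot (fun a b : α => f a = b)) ≤
      Nat.card α + Nat.card {x : α // f x = x} := by
  classical
  set r := fun a b : α => f a = b with hr
  obtain ⟨s, hs⟩ : ∃ s : Quot r → α, ∀ c, Quot.mk r (s c) = c :=
    ⟨fun c => (Quot.exists_rep c).choose, fun c => (Quot.exists_rep c).choose_spec⟩
  have hsinj : Function.Injective s := by
    intro c c' h; rw [← hs c, ← hs c', h]
  have mkf : ∀ c, Quot.mk r (f (s c)) = Quot.mk r (s c) :=
    fun c => (Quot.sound (show r (s c) (f (s c)) from rfl)).symm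
  have mkf' : ∀ c, Quot.mk r (f (s c)) = c := fun c => (mkf c).trans (hs c)
  have key : Function.Injective
      (fun z : Quot r ⊕ Quot r => match z with
        | Sum.inl c => Sum.inl (s c)
        | Sum.inr c => if h : f (s c) = s c then Sum.inr (⟨s c, h⟩ : {x : α // f x = x})
            else Sum.inl (f (s c))) := by
    rintro (c | c) (c' | c') h <;> simp only at h
    · simp only [Sum.inl.injEq] at h
      rw [hsinj h]
    · by_cases hc : f (s c') = s c'
      · rw [dif_pos hc] at h; exact absurd h (by simp)
      · rw [dif_neg hc] at h
        simp only [Sum.inl.injEq] at h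
        have hcc : c = c' := by rw [← hs c, h, mkf']
        exact absurd (hcc ▸ h).symm hc
    · by_cases hc : f (s c) = s c
      · rw [dif_pos hc] at h; exact absurd h (by simp)
      · rw [dif_neg hc] at h
        simp only [Sum.inl.injEq] at h
        have hcc : c = c' := by rw [← mkf' c, h, hs]
        exact absurd (hcc ▸ h) hc
    · by_cases hc : f (s c) = s c <;> by_cases hc' : f (s c') = s c'
      · rw [dif_pos hc, dif_pos hc'] at h
        simp only [Sum.inr.injEq, Subtype.mk.injEq] at h
        rw [hsinj h]
      · rw [dif_pos hc, dif_neg hc'] at h; exact absurd h (by simp)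
      · rw [dif_neg hc, dif_pos hc'] at h; exact absurd h (by simp)
      · rw [dif_neg hc, dif_neg hc'] at h
        simp only [Sum.inl.injEq] at h
        rw [hsinj (f_inj hf h)]
  calc 2 * Nat.card (Quot r) = Nat.card (Quot r ⊕ Quot r) := by
        rw [Nat.card_sum, two_mul]
    _ ≤ Nat.card (α ⊕ {x : α // f x = x}) := Nat.card_le_card_of_injective _ key
    _ = _ := Nat.card_sum
end Inv



lemma numOnes_transpose {k l : ℕ} (M : Matrix (Fin k) (Fin l) Bool) :
    numOnes M.transpose = numOnes M := by
  classical
  unfold numOnes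
  apply Finset.card_bij' (fun p _ => Prod.swap p) (fun p _ => Prod.swap p) <;>
    simp only [Finset.mem_filter] <;> simp [Matrix.transpose]

lemma rows_le_numOnes_s11 {k l : ℕ} {M : Matrix (Fin k) (Fin l) Bool}
    (h : ∀ i, ∃ j, M i j = true) : k ≤ numOnes M := by
  classical
  have := Fintype.card_le_of_injective
    (fun i : Fin k => (⟨(i, (h i).choose), by simpa using (h i).choose_spec⟩ :
      {p : Fin k × Fin l // M p.1 p.2 = true}))
    (by intro a b hab; simpa using congrArg (fun x => x.1.1) hab)
  simpa [numOnes, Fintype.card_subtype] using this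

lemma cols_le_numOnes_s11 {k l : ℕ} {M : Matrix (Fin k) (Fin l) Bool}
    (h : ∀ j, ∃ i, M i j = true) : l ≤ numOnes M := by
  have : l ≤ numOnes M.transpose :=
    rows_le_numOnes_s11 (M := M.transpose) (fun j => h j)
  rwa [numOnes_transpose] at this

abbrev IncT (n : ℕ) := {A : Σ k l : ℕ, Matrix (Fin k) (Fin l) Bool //
    IsIncidence A.2.2 ∧ numOnes A.2.2 = n}

lemma trSigma_invol (A : Σ k l : ℕ, Matrix (Fin k) (Fin l) Bool) :
    trSigma (trSigma A) = A := by
  obtain ⟨k, l, M⟩ := A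
  simp [trSigma]

def trT {n : ℕ} (x : IncT n) : IncT n :=
  ⟨trSigma x.1, ⟨⟨fun i => x.2.1.2 i, fun j => x.2.1.1 j⟩,
    (numOnes_transpose _).trans x.2.2⟩⟩

lemma trT_invol {n : ℕ} (x : IncT n) : trT (trT x) = x :=
  Subtype.ext (trSigma_invol x.1)

-- encoding for finiteness
noncomputable def encode {n : ℕ} (x : IncT n) :
    Fin (n + 1) × Fin (n + 1) × Finset (Fin n × Fin n) :=
  by
    classical
    exact if h : x.1.1 ≤ n ∧ x.1.2.1 ≤ n then
      (⟨x.1.1, Nat.lt_succ_of_le h.1⟩, ⟨x.1.2.1, Nat.lt_succ_of_le h.2⟩,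
        (Finset.univ.filter fun p : Fin x.1.1 × Fin x.1.2.1 => x.1.2.2 p.1 p.2 = true).image
          (fun p => (Fin.castLE h.1 p.1, Fin.castLE h.2 p.2)))
    else (0, 0, ∅)


lemma dims_le {n : ℕ} (x : IncT n) : x.1.1 ≤ n ∧ x.1.2.1 ≤ n := by
  constructor
  · have := rows_le_numOnes_s11 x.2.1.1; rwa [x.2.2] at this
  · have := cols_le_numOnes_s11 x.2.1.2; rwa [x.2.2] at this

lemma mem_encode_image {n K L : ℕ} (N : Matrix (Fin K) (Fin L) Bool) (hK : K ≤ n) (hL : L ≤ n)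
    (i : Fin K) (j : Fin L) :
    ((Fin.castLE hK i, Fin.castLE hL j) ∈
      (Finset.univ.filter fun p : Fin K × Fin L => N p.1 p.2 = true).image
        (fun p => (Fin.castLE hK p.1, Fin.castLE hL p.2))) ↔ N i j = true := by
  classical
  simp only [Finset.mem_image, Finset.mem_filter, Finset.mem_univ, true_and, Prod.ext_iff]
  constructor
  · rintro ⟨p, hp, h1, h2⟩
    rwa [(Fin.castLE_injective hK) h1, (Fin.castLE_injective hL) h2] at hp
  · intro hN
    exact ⟨(i, j), hN, rfl, rfl⟩

lemma encode_injective {n : ℕ} : Function.Injective (encode (n := n)) := by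
  classical
  intro x y h
  have hx := dims_le x
  have hy := dims_le y
  obtain ⟨⟨k, l, M⟩, hxp⟩ := x
  obtain ⟨⟨k', l', M'⟩, hyp⟩ := y
  simp only [encode, dif_pos hx, dif_pos hy, Prod.mk.injEq, Fin.mk.injEq] at h
  obtain ⟨h1, h2, h3⟩ := h
  subst h1; subst h2
  have hM : M = M' := by
    ext i j
    have : M i j = true ↔ M' i j = true := by
      rw [← mem_encode_image M hx.1 hx.2 i j, h3, mem_encode_image M' hx.1 hx.2 i j]
    exact Bool.eq_iff_iff.mpr (by simpa using this)
  subst hM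
  rfl

instance incT_finite (n : ℕ) : Finite (IncT n) :=
  Finite.of_injective encode encode_injective

open Finset Classical in
noncomputable def permToInc {n : ℕ} (σ : Equiv.Perm (Fin n)) : IncT n := by
  refine ⟨⟨n, n, fun i j => decide (σ i = j)⟩, ⟨⟨fun i => ⟨σ i, by simp⟩,
    fun j => ⟨σ.symm j, by simp⟩⟩, ?_⟩⟩
  show (Finset.univ.filter fun p : Fin n × Fin n => decide (σ p.1 = p.2) = true).card = n
  have : (Finset.univ.filter fun p : Fin n × Fin n => decide (σ p.1 = p.2) = true)
      = Finset.univ.image (fun i => (i, σ i)) := by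
    ext p
    simp only [Finset.mem_filter, Finset.mem_univ, true_and, Finset.mem_image,
      decide_eq_true_eq, Prod.ext_iff]
    constructor
    · intro h; exact ⟨p.1, rfl, h⟩
    · rintro ⟨a, rfl, h⟩; exact h
  rw [this, Finset.card_image_of_injective _ (fun a b hab => (Prod.ext_iff.1 hab).1),
    Finset.card_univ, Fintype.card_fin]

lemma permToInc_injective {n : ℕ} : Function.Injective (permToInc (n := n)) := by
  intro σ τ h
  have h1 : (⟨n, n, fun i j => decide (σ i = j)⟩ : Σ k l : ℕ, Matrix (Fin k) (Fin l) Bool)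
      = ⟨n, n, fun i j => decide (τ i = j)⟩ := congrArg Subtype.val h
  injection h1 with e1 h1
  injection h1 with e2 h1
  ext i
  have := congrFun (congrFun h1 i) (σ i)
  simp only [decide_eq_decide] at this
  exact congrArg Fin.val ((by simpa using this.mp (by simp) : τ i = σ i).symm)

lemma factorial_le_card (n : ℕ) :
    n.factorial ≤ Nat.card (IncT n) := by
  have := Nat.card_le_card_of_injective _ (permToInc_injective (n := n))
  simpa [Nat.card_eq_fintype_card, Fintype.card_perm, Fintype.card_fin] using this


abbrev SymT (n : ℕ) := {B : Σ k : ℕ, Matrix (Fin k) (Fin k) Bool //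
  (∀ i j, B.2 i j = B.2 j i) ∧ (∀ i, ∃ j, B.2 i j = true) ∧ numOnes B.2 = n}

abbrev FixT (n : ℕ) := {x : IncT n // trT x = x}

lemma fix_snd_fst {n : ℕ} (x : FixT n) : x.1.1.2.1 = x.1.1.1 :=
  congrArg (fun A => A.1) (congrArg Subtype.val x.2)

lemma fix_master {k l : ℕ} (M : Matrix (Fin k) (Fin l) Bool) (hl : l = k)
    (hfix : trSigma ⟨k, l, M⟩ = ⟨k, l, M⟩) (i j : Fin k) :
    M i (Fin.cast hl.symm j) = M j (Fin.cast hl.symm i) := by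
  subst hl
  have hT : M.transpose = M := by
    have h1 := hfix
    unfold trSigma at h1
    injection h1 with e h1
    first
      | (injection h1 with e2 h1; exact eq_of_heq h1)
      | injection h1 with e2 h1
  simpa [Matrix.transpose] using congrFun (congrFun hT j) i

lemma fix_rows {k l : ℕ} (M : Matrix (Fin k) (Fin l) Bool) (hl : l = k)
    (hrow : ∀ i, ∃ j, M i j = true) (i : Fin k) :
    ∃ j : Fin k, M i (Fin.cast hl.symm j) = true := by
  subst hl; simpa using hrow i

lemma fix_numOnes {k l : ℕ} (M : Matrix (Fin k) (Fin l) Bool) (hl : l = k) :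
    numOnes (Matrix.of fun (i j : Fin k) => M i (Fin.cast hl.symm j)) = numOnes M := by
  subst hl; rfl

noncomputable def fixToSym {n : ℕ} (x : FixT n) : SymT n :=
  ⟨⟨x.1.1.1, Matrix.of fun i j => x.1.1.2.2 i (Fin.cast (fix_snd_fst x).symm j)⟩, by
    refine ⟨?_, ?_, ?_⟩
    · intro i j
      exact fix_master (M := x.1.1.2.2) (hl := fix_snd_fst x) (congrArg Subtype.val x.2) i j
    · intro i
      exact fix_rows (M := x.1.1.2.2) (hl := fix_snd_fst x) x.1.2.1.1 i
    · exact (fix_numOnes (M := x.1.1.2.2) (hl := fix_snd_fst x)).trans x.1.2.2⟩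

lemma sigma_cast_ext {k l k' l' : ℕ} (M : Matrix (Fin k) (Fin l) Bool)
    (M' : Matrix (Fin k') (Fin l') Bool) (hl : l = k) (hl' : l' = k')
    (h : (⟨k, Matrix.of fun i j => M i (Fin.cast hl.symm j)⟩ : Σ m, Matrix (Fin m) (Fin m) Bool)
       = ⟨k', Matrix.of fun i j => M' i (Fin.cast hl'.symm j)⟩) :
    (⟨k, l, M⟩ : Σ a b : ℕ, Matrix (Fin a) (Fin b) Bool) = ⟨k', l', M'⟩ := by
  subst hl; subst hl'
  injection h with e hM
  subst e
  have hM' := eq_of_heq hM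
  have : M = M' := by
    ext i j
    have := congrFun (congrFun hM' i) j
    simpa using this
  rw [this]

lemma fixToSym_injective {n : ℕ} : Function.Injective (fixToSym (n := n)) := by
  intro x y h
  have h2 := congrArg Subtype.val h
  have := sigma_cast_ext x.1.1.2.2 y.1.1.2.2 (fix_snd_fst x) (fix_snd_fst y) h2
  exact Subtype.ext (Subtype.ext this)

open Finset


/-- upper strict part has at most n/2 elements -/
lemma upper_card_le {k n : ℕ} {N : Matrix (Fin k) (Fin k) Bool}
    (hsym : ∀ i j, N i j = N j i) (hones : numOnes N = n) :
    (Finset.univ.filter fun p : Fin k × Fin k => N p.1 p.2 = true ∧ p.1 < p.2).card ≤ n / 2 := by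
  classical
  set U := Finset.univ.filter fun p : Fin k × Fin k => N p.1 p.2 = true ∧ p.1 < p.2 with hU
  set L := Finset.univ.filter fun p : Fin k × Fin k => N p.1 p.2 = true ∧ p.2 < p.1 with hL
  have hcard : L.card = U.card := by
    apply Finset.card_bij' (fun p _ => Prod.swap p) (fun p _ => Prod.swap p)
    · rintro ⟨a, b⟩ h1
      simp only [hU, hL, Finset.mem_filter, Finset.mem_univ, true_and, Prod.swap_prod_mk,
        Prod.fst, Prod.snd] at h1 ⊢
      exact ⟨(hsym b a).trans h1.1, h1.2⟩
    · rintro ⟨a, b⟩ h1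
      simp only [hU, hL, Finset.mem_filter, Finset.mem_univ, true_and, Prod.swap_prod_mk,
        Prod.fst, Prod.snd] at h1 ⊢
      exact ⟨(hsym b a).trans h1.1, h1.2⟩
    · rintro ⟨a, b⟩ _; rfl
    · rintro ⟨a, b⟩ _; rfl
  have hdisj : Disjoint U L := by
    rw [Finset.disjoint_left]
    rintro ⟨a, b⟩ hu hl
    simp only [hU, hL, Finset.mem_filter] at hu hl
    exact absurd hl.2.2 (lt_asymm hu.2.2)
  have hsub : U ∪ L ⊆ Finset.univ.filter fun p : Fin k × Fin k => N p.1 p.2 = true := by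
    intro p hp
    simp only [Finset.mem_filter, Finset.mem_univ, true_and]
    rcases Finset.mem_union.mp hp with h | h
    · simp only [hU, Finset.mem_filter] at h; exact h.2.1
    · simp only [hL, Finset.mem_filter] at h; exact h.2.1
  have h2 : U.card + L.card ≤ n := by
    rw [← Finset.card_union_of_disjoint hdisj, ← hones]
    exact Finset.card_le_card hsub
  rw [hcard] at h2
  rw [Nat.le_div_iff_mul_le (by norm_num)]
  omega

lemma symT_dim_le {n : ℕ} (B : SymT n) : B.1.1 ≤ n := by
  have := rows_le_numOnes_s11 B.2.2.1
  rwa [B.2.2.2] at this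

noncomputable def encodeSym {n : ℕ} (B : SymT n) :
    Fin (n + 1) × Finset (Fin n) × {s : Finset (Fin n × Fin n) // s.card ≤ n / 2} := by
  classical
  exact if h : B.1.1 ≤ n ∧
      (Finset.univ.filter fun p : Fin B.1.1 × Fin B.1.1 => B.1.2 p.1 p.2 = true ∧ p.1 < p.2).card
        ≤ n / 2 then
    (⟨B.1.1, Nat.lt_succ_of_le h.1⟩,
     (Finset.univ.filter fun i : Fin B.1.1 => B.1.2 i i = true).image (Fin.castLE h.1),
     ⟨(Finset.univ.filter fun p : Fin B.1.1 × Fin B.1.1 => B.1.2 p.1 p.2 = true ∧ p.1 < p.2).image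
        (fun p => (Fin.castLE h.1 p.1, Fin.castLE h.1 p.2)),
      le_trans Finset.card_image_le h.2⟩)
  else (0, ∅, ⟨∅, by simp⟩)

lemma encodeSym_injective {n : ℕ} : Function.Injective (encodeSym (n := n)) := by
  classical
  intro x y h
  have hx : x.1.1 ≤ n ∧ _ := ⟨symT_dim_le x, upper_card_le x.2.1 x.2.2.2⟩
  have hy : y.1.1 ≤ n ∧ _ := ⟨symT_dim_le y, upper_card_le y.2.1 y.2.2.2⟩
  obtain ⟨⟨k, M⟩, hsymx, hrowx, honesx⟩ := x
  obtain ⟨⟨k', M'⟩, hsymy, hrowy, honesy⟩ := y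
  simp only [encodeSym, dif_pos hx, dif_pos hy, Prod.mk.injEq, Fin.mk.injEq,
    Subtype.mk.injEq] at h
  obtain ⟨h1, h2, h3⟩ := h
  subst h1
  have hM : M = M' := by
    have key : ∀ (i j : Fin k), i < j → (M i j = true ↔ M' i j = true) := by
      intro i j hij
      have m1 : ((Fin.castLE hx.1 i, Fin.castLE hx.1 j) ∈
          (Finset.univ.filter fun p : Fin k × Fin k => M p.1 p.2 = true ∧ p.1 < p.2).image
            (fun p => (Fin.castLE hx.1 p.1, Fin.castLE hx.1 p.2))) ↔ M i j = true := by
        simp only [Finset.mem_image, Finset.mem_filter, Finset.mem_univ, true_and,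
          Prod.ext_iff]
        constructor
        · rintro ⟨p, ⟨hp, _⟩, e1, e2⟩
          rwa [(Fin.castLE_injective hx.1) e1, (Fin.castLE_injective hx.1) e2] at hp
        · intro hN; exact ⟨(i, j), ⟨hN, hij⟩, rfl, rfl⟩
      have m2 : ((Fin.castLE hx.1 i, Fin.castLE hx.1 j) ∈
          (Finset.univ.filter fun p : Fin k × Fin k => M' p.1 p.2 = true ∧ p.1 < p.2).image
            (fun p => (Fin.castLE hx.1 p.1, Fin.castLE hx.1 p.2))) ↔ M' i j = true := by
        simp only [Finset.mem_image, Finset.mem_filter, Finset.mem_univ, true_and,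
          Prod.ext_iff]
        constructor
        · rintro ⟨p, ⟨hp, _⟩, e1, e2⟩
          rwa [(Fin.castLE_injective hx.1) e1, (Fin.castLE_injective hx.1) e2] at hp
        · intro hN; exact ⟨(i, j), ⟨hN, hij⟩, rfl, rfl⟩
      rw [← m1, h3, m2]
    have keyd : ∀ (i : Fin k), (M i i = true ↔ M' i i = true) := by
      intro i
      have m1 : (Fin.castLE hx.1 i ∈
          (Finset.univ.filter fun a : Fin k => M a a = true).image (Fin.castLE hx.1))
          ↔ M i i = true := by
        simp only [Finset.mem_image, Finset.mem_filter, Finset.mem_univ, true_and]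
        constructor
        · rintro ⟨a, ha, e⟩; rwa [(Fin.castLE_injective hx.1) e] at ha
        · intro hN; exact ⟨i, hN, rfl⟩
      have m2 : (Fin.castLE hx.1 i ∈
          (Finset.univ.filter fun a : Fin k => M' a a = true).image (Fin.castLE hx.1))
          ↔ M' i i = true := by
        simp only [Finset.mem_image, Finset.mem_filter, Finset.mem_univ, true_and]
        constructor
        · rintro ⟨a, ha, e⟩; rwa [(Fin.castLE_injective hx.1) e] at ha
        · intro hN; exact ⟨i, hN, rfl⟩
      rw [← m1, h2, m2]
    ext i j
    rcases lt_trichotomy i j with hij | hij | hij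
    · exact Bool.eq_iff_iff.mpr (by simpa using key i j hij)
    · subst hij; exact Bool.eq_iff_iff.mpr (by simpa using keyd i)
    · have e1 : M i j = M j i := hsymx i j
      have e2 : M' i j = M' j i := hsymy i j
      rw [e1, e2]
      exact Bool.eq_iff_iff.mpr (by simpa using key j i hij)
  subst hM
  rfl

instance symT_finite (n : ℕ) : Finite (SymT n) :=
  Finite.of_injective encodeSym encodeSym_injective

lemma cardS_le (n m : ℕ) :
    Nat.card {s : Finset (Fin n × Fin n) // s.card ≤ m} ≤
      ∑ j ∈ Finset.range (m + 1), (n * n).choose j := by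
  classical
  rw [Nat.card_eq_fintype_card, Fintype.card_subtype]
  have hsub : (Finset.univ.filter fun s : Finset (Fin n × Fin n) => s.card ≤ m) ⊆
      (Finset.range (m + 1)).biUnion (fun j => Finset.powersetCard j Finset.univ) := by
    intro s hs
    simp only [Finset.mem_filter, Finset.mem_univ, true_and] at hs
    apply Finset.mem_biUnion.mpr
    exact ⟨s.card, Finset.mem_range.mpr (Nat.lt_succ_of_le hs),
      Finset.mem_powersetCard.mpr ⟨Finset.subset_univ s, rfl⟩⟩
  calc (Finset.univ.filter fun s : Finset (Fin n × Fin n) => s.card ≤ m).card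
      ≤ ((Finset.range (m + 1)).biUnion (fun j => Finset.powersetCard j Finset.univ)).card :=
        Finset.card_le_card hsub
    _ ≤ ∑ j ∈ Finset.range (m + 1), (Finset.powersetCard j (Finset.univ : Finset (Fin n × Fin n))).card :=
        Finset.card_biUnion_le
    _ = ∑ j ∈ Finset.range (m + 1), (n * n).choose j := by
        apply Finset.sum_congr rfl
        intro j _
        rw [Finset.card_powersetCard, Finset.card_univ, Fintype.card_prod, Fintype.card_fin]

lemma card_fixT_le (n : ℕ) [Finite (IncT n)] :
    Nat.card (FixT n) ≤ (n + 1) * 2 ^ n * ∑ j ∈ Finset.range (n / 2 + 1), (n * n).choose j := by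
  classical
  calc Nat.card (FixT n) ≤ Nat.card (SymT n) :=
        Nat.card_le_card_of_injective _ fixToSym_injective
    _ ≤ Nat.card (Fin (n + 1) × Finset (Fin n) × {s : Finset (Fin n × Fin n) // s.card ≤ n / 2}) :=
        Nat.card_le_card_of_injective _ encodeSym_injective
    _ = (n + 1) * (2 ^ n * Nat.card {s : Finset (Fin n × Fin n) // s.card ≤ n / 2}) := by
        rw [Nat.card_prod, Nat.card_prod]
        simp [Nat.card_eq_fintype_card, Fintype.card_finset, Fintype.card_fin]
    _ ≤ (n + 1) * (2 ^ n * ∑ j ∈ Finset.range (n / 2 + 1), (n * n).choose j) := by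
        apply Nat.mul_le_mul_left
        apply Nat.mul_le_mul_left
        exact cardS_le n (n / 2)
    _ = _ := by ring



lemma pow_self_le_exp_mul_factorial (m : ℕ) :
    (m : ℝ) ^ m ≤ Real.exp m * m.factorial := by
  induction m with
  | zero => simp
  | succ m ih =>
    have key : ((m : ℝ) + 1) ^ m ≤ Real.exp 1 * (m : ℝ) ^ m := by
      rcases Nat.eq_zero_or_pos m with rfl | hm
      · simpa using Real.one_le_exp zero_le_one
      · have hmpos : (0 : ℝ) < m := by exact_mod_cast hm
        have h1 : ((m : ℝ) + 1) = m * (1 + 1 / m) := by field_simp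
        have h2 : (1 + 1 / (m : ℝ)) ≤ Real.exp (1 / m) := by
          have := Real.add_one_le_exp (1 / (m : ℝ)); linarith
        calc ((m : ℝ) + 1) ^ m = (m : ℝ) ^ m * (1 + 1 / m) ^ m := by rw [h1, mul_pow]
          _ ≤ (m : ℝ) ^ m * Real.exp (1 / m) ^ m := by
              apply mul_le_mul_of_nonneg_left (pow_le_pow_left₀ (by positivity) h2 m)
                (by positivity)
          _ = (m : ℝ) ^ m * Real.exp 1 := by
              rw [← Real.exp_nat_mul]
              congr 1; field_simp
          _ = Real.exp 1 * (m : ℝ) ^ m := mul_comm _ _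
    calc ((m + 1 : ℕ) : ℝ) ^ (m + 1) = ((m : ℝ) + 1) * ((m : ℝ) + 1) ^ m := by push_cast; ring
      _ ≤ ((m : ℝ) + 1) * (Real.exp 1 * (m : ℝ) ^ m) := by
          apply mul_le_mul_of_nonneg_left key (by positivity)
      _ ≤ ((m : ℝ) + 1) * (Real.exp 1 * (Real.exp m * m.factorial)) := by
          apply mul_le_mul_of_nonneg_left
            (mul_le_mul_of_nonneg_left ih (le_of_lt (Real.exp_pos 1))) (by positivity)
      _ = Real.exp ((m : ℝ) + 1) * (((m : ℝ) + 1) * m.factorial) := by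
          rw [Real.exp_add]; ring
      _ = Real.exp ((m + 1 : ℕ) : ℝ) * ((m + 1).factorial) := by
          rw [Nat.factorial_succ]; push_cast; ring

lemma inv_factorial_le (m : ℕ) : 1 / (m.factorial : ℝ) ≤ Real.exp m / (m : ℝ) ^ m := by
  rcases Nat.eq_zero_or_pos m with rfl | hm
  · simp
  · have hmpos : (0 : ℝ) < m := by exact_mod_cast hm
    rw [div_le_div_iff₀ (by exact_mod_cast m.factorial_pos) (by positivity)]
    have := pow_self_le_exp_mul_factorial m
    linarith

lemma fact_le_fact_mul_pow (N j : ℕ) :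
    ∀ m, j ≤ m → m ≤ N → m.factorial ≤ j.factorial * N ^ (m - j) := by
  intro m
  induction m with
  | zero => intro h _; interval_cases j; simp
  | succ m ih =>
    intro hj hm
    rcases Nat.eq_or_lt_of_le hj with rfl | hlt
    · simp
    · have hj' : j ≤ m := Nat.lt_succ_iff.mp hlt
      have hm' : m ≤ N := le_trans (Nat.le_succ m) hm
      calc (m + 1).factorial = (m + 1) * m.factorial := rfl
        _ ≤ N * (j.factorial * N ^ (m - j)) := Nat.mul_le_mul hm (ih hj' hm')
        _ = j.factorial * (N ^ (m - j) * N) := by ring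
        _ = j.factorial * N ^ (m - j + 1) := by rw [pow_succ]
        _ = j.factorial * N ^ (m + 1 - j) := by rw [Nat.succ_sub hj']

lemma sum_choose_le (N m : ℕ) (hm : m ≤ N) :
    (∑ j ∈ Finset.range (m + 1), ((N.choose j : ℕ) : ℝ)) ≤
      ((m : ℝ) + 1) * (N : ℝ) ^ m / m.factorial := by
  have hterm : ∀ j ∈ Finset.range (m + 1), ((N.choose j : ℕ) : ℝ) ≤ (N : ℝ) ^ m / m.factorial := by
    intro j hj
    have hj' : j ≤ m := Nat.lt_succ_iff.mp (Finset.mem_range.mp hj)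
    calc ((N.choose j : ℕ) : ℝ) ≤ (N : ℝ) ^ j / j.factorial := Nat.choose_le_pow_div j N
      _ ≤ (N : ℝ) ^ m / m.factorial := by
        rw [div_le_div_iff₀ (by exact_mod_cast j.factorial_pos)
          (by exact_mod_cast m.factorial_pos)]
        have h1 : (m.factorial : ℝ) ≤ j.factorial * (N : ℝ) ^ (m - j) := by
          exact_mod_cast fact_le_fact_mul_pow N j m hj' hm
        calc (N : ℝ) ^ j * m.factorial ≤ (N : ℝ) ^ j * (j.factorial * (N : ℝ) ^ (m - j)) := by
              apply mul_le_mul_of_nonneg_left h1 (by positivity)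
          _ = (N : ℝ) ^ (j + (m - j)) * j.factorial := by rw [pow_add]; ring
          _ = (N : ℝ) ^ m * j.factorial := by rw [Nat.add_sub_cancel' hj']
  calc (∑ j ∈ Finset.range (m + 1), ((N.choose j : ℕ) : ℝ))
      ≤ ∑ _j ∈ Finset.range (m + 1), (N : ℝ) ^ m / m.factorial := Finset.sum_le_sum hterm
    _ = ((m : ℝ) + 1) * ((N : ℝ) ^ m / m.factorial) := by
        rw [Finset.sum_const, Finset.card_range]; push_cast; ring
    _ = ((m : ℝ) + 1) * (N : ℝ) ^ m / m.factorial := by ring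

lemma pow_self_pos (m : ℕ) : 0 < ((m : ℝ)) ^ m := by
  rcases Nat.eq_zero_or_pos m with rfl | hm
  · simp
  · have : (0 : ℝ) < m := by exact_mod_cast hm
    positivity

noncomputable def c0 : ℝ := 2 * Real.exp 2

lemma c0_pos : 0 < c0 := by
  have := Real.exp_pos 2; unfold c0; positivity

lemma one_le_c0 : 1 ≤ c0 := by
  have h := Real.one_le_exp (by norm_num : (0 : ℝ) ≤ 2)
  unfold c0; nlinarith

lemma c0_pow (n : ℕ) : c0 ^ n = 2 ^ n * (Real.exp n * Real.exp n) := by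
  rw [c0, mul_pow, ← Real.exp_add, ← Real.exp_nat_mul]
  congr 2
  push_cast; ring

noncomputable def hfun (m : ℕ) : ℝ := 2 * c0 * ((m : ℝ) + 1) ^ 2 * (c0 ^ 2) ^ m / (m : ℝ) ^ m

lemma aux_tendsto : Tendsto (fun m : ℕ => ((m : ℝ) + 1) ^ 2 * (1 / 2 : ℝ) ^ m) atTop (𝓝 0) := by
  have base := tendsto_pow_const_mul_const_pow_of_lt_one 2
    (by norm_num : (0 : ℝ) ≤ 1 / 2) (by norm_num : (1 / 2 : ℝ) < 1)
  have sh : Tendsto (fun m : ℕ => (((m + 1 : ℕ) : ℝ)) ^ 2 * (1 / 2 : ℝ) ^ (m + 1)) atTop (𝓝 0) :=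
    base.comp (tendsto_add_atTop_nat 1)
  have h2 := sh.const_mul (2 : ℝ)
  rw [mul_zero] at h2
  refine h2.congr (fun m => ?_)
  push_cast
  ring

lemma hfun_tendsto : Tendsto hfun atTop (𝓝 0) := by
  apply squeeze_zero' (t₀ := atTop)
  · filter_upwards [eventually_ge_atTop 0] with m _
    unfold hfun
    have h1 := pow_self_pos m
    have h2 := c0_pos
    positivity
  · filter_upwards [eventually_ge_atTop ⌈2 * c0 ^ 2⌉₊] with m hm
    have hm' : 2 * c0 ^ 2 ≤ (m : ℝ) := le_trans (Nat.le_ceil _) (by exact_mod_cast hm)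
    have hmpos : (0 : ℝ) < m := lt_of_lt_of_le (by nlinarith [c0_pos]) hm'
    have key : (c0 ^ 2) ^ m / (m : ℝ) ^ m ≤ (1 / 2 : ℝ) ^ m := by
      rw [← div_pow]
      apply pow_le_pow_left₀ (by positivity)
      rw [div_le_div_iff₀ hmpos (by norm_num)]
      nlinarith
    calc hfun m = (2 * c0 * ((m : ℝ) + 1) ^ 2) * ((c0 ^ 2) ^ m / (m : ℝ) ^ m) := by
          unfold hfun; ring
      _ ≤ (2 * c0 * ((m : ℝ) + 1) ^ 2) * (1 / 2 : ℝ) ^ m := by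
          apply mul_le_mul_of_nonneg_left key (by have := c0_pos; positivity)
      _ = 2 * c0 * (((m : ℝ) + 1) ^ 2 * (1 / 2 : ℝ) ^ m) := by ring
  · have := (aux_tendsto.const_mul (2 * c0))
    rw [mul_zero] at this
    exact this

lemma half_tendsto : Tendsto (fun n : ℕ => n / 2) atTop atTop :=
  tendsto_atTop_atTop.2 fun b => ⟨2 * b, fun n hn => by omega⟩

lemma main_ratio_tendsto :
    Tendsto (fun n : ℕ =>
      (((n + 1) * 2 ^ n * ∑ j ∈ Finset.range (n / 2 + 1), (n * n).choose j : ℕ) : ℝ) /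
        (n.factorial : ℝ)) atTop (𝓝 0) := by
  apply squeeze_zero' (t₀ := atTop)
  · filter_upwards [eventually_ge_atTop 0] with n _
    positivity
  · filter_upwards [eventually_ge_atTop 1] with n hn
    set M := n / 2 with hM
    have hn1 : (1 : ℝ) ≤ (n : ℝ) := by exact_mod_cast hn
    have hMn : M ≤ n := Nat.div_le_self n 2
    have h2M : 2 * M ≤ n := by omega
    have hn2M : n ≤ 2 * M + 1 := by omega
    have hMnn : M ≤ n * n := hMn.trans (Nat.le_mul_of_pos_left n (by omega))
    have hMe : Real.exp M ≤ Real.exp n := Real.exp_le_exp.mpr (by exact_mod_cast hMn)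
    have hnnpos : (0 : ℝ) < (n : ℝ) ^ n := by positivity
    have e1 : ((n : ℝ) * n) ^ M ≤ (n : ℝ) ^ n := by
      calc ((n : ℝ) * n) ^ M = (n : ℝ) ^ (2 * M) := by
            rw [two_mul, pow_add]; ring
        _ ≤ (n : ℝ) ^ n := pow_le_pow_right₀ hn1 h2M
    have Qle : ((n : ℝ) + 1) * 2 ^ n * ((n : ℝ) * n) ^ M * Real.exp M * Real.exp n / (n : ℝ) ^ n
        ≤ 2 * c0 * ((M : ℝ) + 1) * (c0 ^ 2) ^ M := by
      calc ((n : ℝ) + 1) * 2 ^ n * ((n : ℝ) * n) ^ M * Real.exp M * Real.exp n / (n : ℝ) ^ n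
          = ((n : ℝ) + 1) * 2 ^ n * Real.exp M * Real.exp n * (((n : ℝ) * n) ^ M / (n : ℝ) ^ n) := by
            ring
        _ ≤ ((n : ℝ) + 1) * 2 ^ n * Real.exp n * Real.exp n * 1 := by
            gcongr ((n : ℝ) + 1) * 2 ^ n * ?_ * Real.exp ↑n * ?_
            · exact div_le_one_of_le₀ e1 (le_of_lt hnnpos)
        _ = ((n : ℝ) + 1) * c0 ^ n := by rw [c0_pow]; ring
        _ ≤ (2 * ((M : ℝ) + 1)) * (c0 * (c0 ^ 2) ^ M) := by
            apply mul_le_mul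
            · have : (n : ℝ) + 1 ≤ 2 * M + 2 := by
                have : n ≤ 2 * M + 1 := by omega
                have := (Nat.cast_le (α := ℝ)).mpr this
                push_cast at this ⊢; linarith
              linarith
            · calc c0 ^ n ≤ c0 ^ (2 * M + 1) := pow_le_pow_right₀ one_le_c0 hn2M
                _ = c0 * (c0 ^ 2) ^ M := by rw [pow_succ, pow_mul]; ring
            · have := c0_pos; positivity
            · positivity
        _ = 2 * c0 * ((M : ℝ) + 1) * (c0 ^ 2) ^ M := by ring
    have hMM := pow_self_pos M
    calc (((n + 1) * 2 ^ n * ∑ j ∈ Finset.range (M + 1), (n * n).choose j : ℕ) : ℝ) /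
          (n.factorial : ℝ)
        = ((n : ℝ) + 1) * 2 ^ n * (∑ j ∈ Finset.range (M + 1), ((n * n).choose j : ℝ)) /
            (n.factorial : ℝ) := by push_cast; ring
      _ ≤ ((n : ℝ) + 1) * 2 ^ n * (((M : ℝ) + 1) * ((n * n : ℕ) : ℝ) ^ M / M.factorial) /
            (n.factorial : ℝ) := by
          gcongr
          exact sum_choose_le (n * n) M hMnn
      _ = (((n : ℝ) + 1) * 2 ^ n * (((M : ℝ) + 1) * ((n : ℝ) * n) ^ M)) *
            (1 / (M.factorial : ℝ)) * (1 / (n.factorial : ℝ)) := by push_cast; ring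
      _ ≤ (((n : ℝ) + 1) * 2 ^ n * (((M : ℝ) + 1) * ((n : ℝ) * n) ^ M)) *
            (Real.exp M / (M : ℝ) ^ M) * (Real.exp n / (n : ℝ) ^ n) := by
          gcongr (((n : ℝ) + 1) * 2 ^ n * (((M : ℝ) + 1) * ((n : ℝ) * n) ^ M)) * ?_ * ?_
          · exact inv_factorial_le M
          · exact inv_factorial_le n
      _ = (((M : ℝ) + 1) / (M : ℝ) ^ M) *
            (((n : ℝ) + 1) * 2 ^ n * ((n : ℝ) * n) ^ M * Real.exp M * Real.exp n / (n : ℝ) ^ n) := by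
          ring
      _ ≤ (((M : ℝ) + 1) / (M : ℝ) ^ M) * (2 * c0 * ((M : ℝ) + 1) * (c0 ^ 2) ^ M) := by
          apply mul_le_mul_of_nonneg_left Qle (by positivity)
      _ = hfun M := by unfold hfun; ring
  · exact hfun_tendsto.comp half_tendsto


lemma phi_eq (n : ℕ) : Phi11 n = Nat.card (Quot fun a b : IncT n => trT a = b) := by
  unfold Phi11
  congr 1
  have : (fun x y : IncT n => trSigma x.1 = y.1) = (fun a b : IncT n => trT a = b) := by
    funext x y
    exact propext ⟨fun h => Subtype.ext h, fun h => congrArg Subtype.val h⟩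
  rw [this]

lemma F_eq (n : ℕ) : F1111 n = Nat.card (IncT n) := rfl

lemma h_lower (n : ℕ) : F1111 n ≤ 2 * Phi11 n := by
  rw [F_eq, phi_eq]
  exact card_le_two_mul_quot trT_invol

lemma h_upper (n : ℕ) : 2 * Phi11 n ≤ F1111 n + Nat.card (FixT n) := by
  rw [F_eq, phi_eq]
  exact two_mul_quot_le trT_invol

/-- `Φ₁₁(n) ∼ (1/2) F₁₁₁₁(n)` as `n → ∞`. -/
theorem Phi11_asymptotics :
    Filter.Tendsto (fun n : ℕ => (Phi11 n : ℝ) / ((1 / 2) * (F1111 n : ℝ)))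
      Filter.atTop (nhds 1) := by
  have hK := main_ratio_tendsto
  set K : ℕ → ℕ := fun n => (n + 1) * 2 ^ n * ∑ j ∈ Finset.range (n / 2 + 1), (n * n).choose j
    with hKdef
  have hupper : Tendsto (fun n : ℕ => 1 + (K n : ℝ) / n.factorial) atTop (𝓝 1) := by
    have h0 := (tendsto_const_nhds (x := (1 : ℝ)) (f := atTop (α := ℕ))).add hK
    rw [add_zero] at h0
    exact h0
  apply tendsto_of_tendsto_of_tendsto_of_le_of_le' (g := fun _ : ℕ => (1 : ℝ))
      (h := fun n => 1 + (K n : ℝ) / n.factorial) tendsto_const_nhds hupper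
  · filter_upwards [eventually_ge_atTop 0] with n _
    have h3 := factorial_le_card n
    have hFn : (0 : ℝ) < F1111 n := by
      have : 0 < F1111 n := lt_of_lt_of_le n.factorial_pos h3
      exact_mod_cast this
    rw [le_div_iff₀ (by positivity)]
    have h1 : (F1111 n : ℝ) ≤ 2 * Phi11 n := by exact_mod_cast h_lower n
    linarith
  · filter_upwards [eventually_ge_atTop 0] with n _
    have h3 := factorial_le_card n
    have hFn : (0 : ℝ) < F1111 n := by
      have : 0 < F1111 n := lt_of_lt_of_le n.factorial_pos h3
      exact_mod_cast this
    have hfactpos : (0 : ℝ) < n.factorial := by exact_mod_cast n.factorial_pos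
    have hfactF : (n.factorial : ℝ) ≤ F1111 n := by exact_mod_cast h3
    have a3 : 2 * (Phi11 n : ℝ) ≤ F1111 n + K n := by
      have := le_trans (h_upper n) (Nat.add_le_add_left (card_fixT_le n) _)
      exact_mod_cast this
    have hqnn : (0 : ℝ) ≤ (K n : ℝ) / n.factorial := by positivity
    have a1 : (K n : ℝ) / n.factorial * n.factorial ≤ (K n : ℝ) / n.factorial * F1111 n :=
      mul_le_mul_of_nonneg_left hfactF hqnn
    have a2 : (K n : ℝ) / n.factorial * n.factorial = K n := by field_simp
    rw [div_le_iff₀ (by positivity)]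
    nlinarith [a1, a2, a3]
end

section
/- For every n ≥ 1, I(n) ≤ S₁₁(n) ≤ I(n) · P(n) / n!, where I(n) is the number of involutions in the symmetric group Sₙ. -/
open scoped BigOperators

-- ===== auxiliary definitions and lemmas for S11_bounds =====

section S11Aux

abbrev Cells {k : ℕ} (M : Matrix (Fin k) (Fin k) Bool) : Type :=
  {p : Fin k × Fin k // M p.1 p.2 = true}

lemma card_cells {k : ℕ} (M : Matrix (Fin k) (Fin k) Bool) :
    Fintype.card (Cells M) = numOnes M := by
  classical
  rw [numOnes, Fintype.card_subtype]

def swapCell {k : ℕ} {M : Matrix (Fin k) (Fin k) Bool} (h : ∀ i j, M i j = M j i) :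
    Cells M ≃ Cells M where
  toFun c := ⟨(c.1.2, c.1.1), by rw [h]; exact c.2⟩
  invFun c := ⟨(c.1.2, c.1.1), by rw [h]; exact c.2⟩
  left_inv c := by rcases c with ⟨⟨i, j⟩, hc⟩; rfl
  right_inv c := by rcases c with ⟨⟨i, j⟩, hc⟩; rfl

@[simp] lemma swapCell_swapCell {k : ℕ} {M : Matrix (Fin k) (Fin k) Bool}
    (h : ∀ i j, M i j = M j i) (c : Cells M) : swapCell h (swapCell h c) = c :=
  (swapCell h).left_inv c

abbrev SymSub (n : ℕ) : Type :=
  {A : Σ k : ℕ, Matrix (Fin k) (Fin k) Bool //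
    (∀ i j, A.2 i j = A.2 j i) ∧ IsIncidence A.2 ∧ numOnes A.2 = n}

lemma S11_eq_card (n : ℕ) : S11 n = Nat.card (SymSub n) := rfl

lemma k_le_of_inc {k n : ℕ} {M : Matrix (Fin k) (Fin k) Bool}
    (hinc : ∀ i, ∃ j, M i j = true) (hones : numOnes M = n) : k ≤ n := by
  classical
  have hf : Function.Injective
      (fun i : Fin k => (⟨(i, (hinc i).choose), (hinc i).choose_spec⟩ : Cells M)) := by
    intro a b h
    exact congrArg (fun c : Cells M => c.1.1) h
  calc k = Fintype.card (Fin k) := (Fintype.card_fin k).symm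
    _ ≤ Fintype.card (Cells M) := Fintype.card_le_of_injective _ hf
    _ = n := by rw [card_cells, hones]

instance finite_symSub (n : ℕ) : Finite (SymSub n) := by
  classical
  have hg : Function.Injective
      (fun A : SymSub n =>
        (⟨⟨A.1.1, Nat.lt_succ_of_le (k_le_of_inc A.2.2.1.1 A.2.2.2)⟩, A.1.2⟩ :
          Σ k : Fin (n + 1), Matrix (Fin k) (Fin k) Bool)) := by
    rintro ⟨⟨k, M⟩, h⟩ ⟨⟨k', M'⟩, h'⟩ e
    simp only at e
    injection e with h1 h2
    injection h1 with hk
    subst hk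
    have hM' : M = M' := eq_of_heq h2
    subst hM'
    rfl
  exact Finite.of_injective _ hg

end S11Aux

section Lower

lemma lower_bound (n : ℕ) : numInvolutions n ≤ S11 n := by
  classical
  have hinvapp : ∀ s : {σ : Equiv.Perm (Fin n) // σ * σ = 1}, ∀ i, s.1 (s.1 i) = i := by
    intro s i
    have := congrFun (congrArg (fun σ : Equiv.Perm (Fin n) => (σ : Fin n → Fin n)) s.2) i
    simpa [Equiv.Perm.mul_apply] using this
  let f : {σ : Equiv.Perm (Fin n) // σ * σ = 1} → SymSub n := fun s =>
    ⟨⟨n, Matrix.of fun i j => decide (s.1 i = j)⟩,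
      by
        intro i j
        simp only [Matrix.of_apply]
        rw [decide_eq_decide]
        constructor
        · intro h; rw [← h, hinvapp]
        · intro h; rw [← h, hinvapp],
      ⟨fun i => ⟨s.1 i, by simp⟩, fun j => ⟨s.1 j, by simp [hinvapp s j]⟩⟩,
      by
        have himg : (Finset.univ.filter fun p : Fin n × Fin n =>
            (Matrix.of fun i j => decide (s.1 i = j)) p.1 p.2 = true)
            = Finset.univ.image (fun i => (i, s.1 i)) := by
          ext p
          simp only [Finset.mem_filter, Finset.mem_univ, true_and, Finset.mem_image,
            Matrix.of_apply, decide_eq_true_eq]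
          constructor
          · intro h; exact ⟨p.1, by rw [h]⟩
          · rintro ⟨i, rfl⟩; rfl
        rw [numOnes, himg, Finset.card_image_of_injective _ (fun a b hab => (Prod.ext_iff.mp hab).1),
          Finset.card_univ, Fintype.card_fin]⟩
  have hf : Function.Injective f := by
    rintro ⟨σ, hσ⟩ ⟨σ', hσ'⟩ e
    have e1 : (⟨n, Matrix.of fun i j => decide (σ i = j)⟩ : Σ k : ℕ, Matrix (Fin k) (Fin k) Bool)
        = ⟨n, Matrix.of fun i j => decide (σ' i = j)⟩ := congrArg Subtype.val e
    injection e1 with _ h2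
    have hM : (Matrix.of fun i j => decide (σ i = j))
        = (Matrix.of fun i j => decide (σ' i = j)) := h2
    apply Subtype.ext
    apply Equiv.ext
    intro i
    have := congrFun (congrFun (congrArg (fun M : Matrix (Fin n) (Fin n) Bool => (M : Fin n → Fin n → Bool)) hM) i) (σ' i)
    simp only [Matrix.of_apply, decide_eq_decide] at this
    simpa using this
  rw [S11_eq_card]
  exact Nat.card_le_card_of_injective f hf

end Lower

section Upper

abbrev TType (n : ℕ) : Type := Σ A : SymSub n, (Fin n ≃ Cells A.1.2)

abbrev InvT (n : ℕ) := {σ : Equiv.Perm (Fin n) // σ * σ = 1}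

abbrev PreT (n : ℕ) := {R : Fin n → Fin n → Prop //
    (∀ x, R x x) ∧ (∀ x y z, R x y → R y z → R x z) ∧ (∀ x y, R x y ∨ x = y ∨ R y x)}

def PhiMap (n : ℕ) : TType n → InvT n × PreT n := fun x =>
  (⟨(x.2.trans (swapCell x.1.2.1)).trans x.2.symm, by
      apply Equiv.ext
      intro a
      simp [Equiv.Perm.mul_apply, Equiv.trans_apply]⟩,
   ⟨fun a b => (x.2 a).1.1 ≤ (x.2 b).1.1,
    fun a => le_refl _,
    fun a b c hab hbc => le_trans hab hbc,
    fun a b => (le_total (x.2 a).1.1 (x.2 b).1.1).imp id Or.inr⟩)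

lemma phi_inj (n : ℕ) : Function.Injective (PhiMap n) := by
  classical
  rintro ⟨⟨⟨k, M⟩, hsym, hinc, hones⟩, ℓ⟩ ⟨⟨⟨k', M'⟩, hsym', hinc', hones'⟩, ℓ'⟩ e
  obtain ⟨e1, e2⟩ := Prod.ext_iff.mp e
  have hσa : ∀ a, ℓ.symm (swapCell hsym (ℓ a)) = ℓ'.symm (swapCell hsym' (ℓ' a)) :=
    fun a => Equiv.ext_iff.mp (congrArg Subtype.val e1) a
  have hR := congrArg Subtype.val e2
  have hRR : ∀ a b, ((ℓ a).1.1 ≤ (ℓ b).1.1 ↔ (ℓ' a).1.1 ≤ (ℓ' b).1.1) :=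
    fun a b => iff_of_eq (congrFun (congrFun hR a) b)
  have hsame : ∀ a b, (ℓ a).1.1 = (ℓ b).1.1 → (ℓ' a).1.1 = (ℓ' b).1.1 :=
    fun a b h => le_antisymm ((hRR a b).mp h.le) ((hRR b a).mp h.ge)
  have hsurj : ∀ i : Fin k, ∃ a, (ℓ a).1.1 = i := by
    intro i
    obtain ⟨j, hj⟩ := hinc.1 i
    exact ⟨ℓ.symm ⟨(i, j), hj⟩, by simp⟩
  have hsurj' : ∀ i : Fin k', ∃ a, (ℓ' a).1.1 = i := by
    intro i
    obtain ⟨j, hj⟩ := hinc'.1 i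
    exact ⟨ℓ'.symm ⟨(i, j), hj⟩, by simp⟩
  set s : Fin k → Fin n := fun i => (hsurj i).choose with hs_def
  have hs : ∀ i, (ℓ (s i)).1.1 = i := fun i => (hsurj i).choose_spec
  set h : Fin k → Fin k' := fun i => (ℓ' (s i)).1.1 with hh_def
  have hmono : StrictMono h := by
    intro i i' hlt
    rw [lt_iff_le_not_ge] at hlt ⊢
    refine ⟨(hRR (s i) (s i')).mp (by rw [hs, hs]; exact hlt.1), fun hc => hlt.2 ?_⟩
    have := (hRR (s i') (s i)).mpr hc
    rwa [hs, hs] at this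
  have hhsurj : Function.Surjective h := by
    intro i'
    obtain ⟨a, ha⟩ := hsurj' i'
    refine ⟨(ℓ a).1.1, ?_⟩
    have : (ℓ' (s ((ℓ a).1.1))).1.1 = (ℓ' a).1.1 := hsame _ _ (hs _)
    rw [hh_def]; dsimp only; rw [this, ha]
  let e0 : Fin k ≃o Fin k' := StrictMono.orderIsoOfSurjective h hmono hhsurj
  have hk : k = k' := by
    have := Fintype.card_congr e0.toEquiv
    simpa using this
  subst hk
  have he0 : ∀ i, e0 i = i := fun i => Fin.ext (Fin.coe_orderIso_apply e0 i)
  have hrow : ∀ a, (ℓ' a).1.1 = (ℓ a).1.1 := by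
    intro a
    have h1 : h ((ℓ a).1.1) = (ℓ' a).1.1 := hsame _ _ (hs _)
    have h2 : e0 ((ℓ a).1.1) = h ((ℓ a).1.1) :=
      congrFun (StrictMono.coe_orderIsoOfSurjective h hmono hhsurj) _
    rw [← h1, ← h2, he0]
  have hcol : ∀ a, (ℓ' a).1.2 = (ℓ a).1.2 := by
    intro a
    have c1 : (ℓ (ℓ.symm (swapCell hsym (ℓ a)))).1.1 = (ℓ a).1.2 := by
      rw [Equiv.apply_symm_apply]; rfl
    have c2 : (ℓ' (ℓ'.symm (swapCell hsym' (ℓ' a)))).1.1 = (ℓ' a).1.2 := by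
      rw [Equiv.apply_symm_apply]; rfl
    rw [← c1, ← c2, ← hσa a, hrow]
  have hM : M = M' := by
    funext i j
    rw [Bool.eq_iff_iff]
    constructor
    · intro hij
      have ha : ℓ (ℓ.symm ⟨(i, j), hij⟩) = ⟨(i, j), hij⟩ := Equiv.apply_symm_apply _ _
      have h2 := (ℓ' (ℓ.symm ⟨(i, j), hij⟩)).2
      rwa [hrow, hcol, ha] at h2
    · intro hij
      have ha : ℓ' (ℓ'.symm ⟨(i, j), hij⟩) = ⟨(i, j), hij⟩ := Equiv.apply_symm_apply _ _
      have h2 := (ℓ (ℓ'.symm ⟨(i, j), hij⟩)).2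
      rwa [← hrow, ← hcol, ha] at h2
  subst hM
  have hℓ : ℓ = ℓ' := by
    apply Equiv.ext
    intro a
    exact Subtype.ext (Prod.ext_iff.mpr ⟨(hrow a).symm, (hcol a).symm⟩)
  cases hℓ
  rfl

lemma card_T (n : ℕ) : Nat.card (TType n) = S11 n * n.factorial := by
  classical
  letI : Fintype (SymSub n) := Fintype.ofFinite _
  rw [Nat.card_eq_fintype_card, Fintype.card_sigma]
  have hcongr : ∀ A : SymSub n, Fintype.card (Fin n ≃ Cells A.1.2) = n.factorial := by
    intro A
    have hc : Fintype.card (Cells A.1.2) = n := by rw [card_cells]; exact A.2.2.2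
    have e : Fin n ≃ Cells A.1.2 := Fintype.equivOfCardEq (by simp [hc])
    rw [Fintype.card_equiv e, Fintype.card_fin]
  rw [Finset.sum_congr rfl (fun A _ => hcongr A), Finset.sum_const, Finset.card_univ,
    smul_eq_mul, S11_eq_card, Nat.card_eq_fintype_card]

lemma key_count (n : ℕ) : n.factorial * S11 n ≤ numInvolutions n * numPreorders n := by
  have h1 : Nat.card (TType n) ≤ Nat.card (InvT n × PreT n) :=
    Nat.card_le_card_of_injective _ (phi_inj n)
  rw [card_T, Nat.card_prod] at h1
  calc n.factorial * S11 n = S11 n * n.factorial := mul_comm _ _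
    _ ≤ Nat.card (InvT n) * Nat.card (PreT n) := h1
    _ = numInvolutions n * numPreorders n := rfl

end Upper

/-- `I(n) ≤ S₁₁(n) ≤ I(n)·P(n)/n!` for every `n ≥ 1`. -/
theorem S11_bounds (n : ℕ) (hn : 1 ≤ n) :
    numInvolutions n ≤ S11 n ∧
      (S11 n : ℚ) ≤ (numInvolutions n : ℚ) * (numPreorders n : ℚ) / (n.factorial : ℚ) := by
  refine ⟨lower_bound n, ?_⟩
  have hfac : (0 : ℚ) < (n.factorial : ℚ) := by positivity
  rw [le_div_iff₀ hfac]
  have hkey := key_count n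
  calc (S11 n : ℚ) * (n.factorial : ℚ) = ((n.factorial * S11 n : ℕ) : ℚ) := by push_cast; ring
    _ ≤ ((numInvolutions n * numPreorders n : ℕ) : ℚ) := by exact_mod_cast hkey
    _ = _ := by push_cast; ring
end
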